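/- arXiv:2305.06250 — 4 statements merged into one kernel-verified Lean document; each statement's English description precedes it below -/
import Mathlib

section
/- The polymatroidal axioms (nonnegativity, monotonicity, submodularity) for a set function h: 2^{N_n} → ℝ with h(∅) = 0 are equivalent to the elemental inequalities: h(N_n) ≥ h(N_n \ {i}) for each i ∈ N_n, and h(K) + h(K ∪ {i,j}) ≤ h(K ∪ {i}) + h(K ∪ {j}) for all distinct i, j ∈ N_n and K ⊆ N_n \ {i,j}. -/
open Finset

private lemma dim_lemma {n : ℕ} {h : Finset (Fin n) → ℝ}
    (hel : ∀ i j : Fin n, ∀ K : Finset (Fin n), i ≠ j → i ∉ K → j ∉ K →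
        h K + h (insert i (insert j K)) ≤ h (insert i K) + h (insert j K)) :
    ∀ (L K : Finset (Fin n)) (i : Fin n), K ⊆ L → i ∉ L →
      h (insert i L) + h K ≤ h (insert i K) + h L := by
  suffices H : ∀ (m : ℕ) (L K : Finset (Fin n)) (i : Fin n), (L \ K).card = m →
      K ⊆ L → i ∉ L → h (insert i L) + h K ≤ h (insert i K) + h L by
    intro L K i hKL hiL; exact H _ L K i rfl hKL hiL
  intro m
  induction m with
  | zero =>
    intro L K i hcard hKL hiL
    have hLK : L ⊆ K := by
      rw [← sdiff_eq_empty_iff_subset, ← Finset.card_eq_zero]; exact hcard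
    have : K = L := Subset.antisymm hKL hLK
    subst this; linarith
  | succ m ih =>
    intro L K i hcard hKL hiL
    have hne : (L \ K).Nonempty := by rw [← card_pos, hcard]; omega
    obtain ⟨j, hj⟩ := hne
    rw [mem_sdiff] at hj
    obtain ⟨hjL, hjK⟩ := hj
    have hij : i ≠ j := fun e => hiL (e ▸ hjL)
    have hiK : i ∉ K := fun e => hiL (hKL e)
    have step := hel i j K hij hiK hjK
    have hsub : insert j K ⊆ L := insert_subset hjL hKL
    have hcard' : (L \ insert j K).card = m := by
      rw [sdiff_insert, card_erase_of_mem (mem_sdiff.mpr ⟨hjL, hjK⟩), hcard]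
      omega
    have IH := ih L (insert j K) i hcard' hsub hiL
    linarith

private lemma gen_lemma {n : ℕ} {h : Finset (Fin n) → ℝ}
    (hel : ∀ i j : Fin n, ∀ K : Finset (Fin n), i ≠ j → i ∉ K → j ∉ K →
        h K + h (insert i (insert j K)) ≤ h (insert i K) + h (insert j K)) :
    ∀ (C K L : Finset (Fin n)), K ⊆ L → Disjoint C L →
      h (L ∪ C) + h K ≤ h (K ∪ C) + h L := by
  intro C
  induction C using Finset.induction_on with
  | empty => intro K L hKL _; simp only [union_empty]; linarith
  | @insert i C hiC ihC =>
    intro K L hKL hdis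
    rw [disjoint_insert_left] at hdis
    obtain ⟨hiL, hdC⟩ := hdis
    have IH := ihC K L hKL hdC
    have hKC : K ∪ C ⊆ L ∪ C := union_subset_union hKL (Subset.refl C)
    have hiLC : i ∉ L ∪ C := by
      rw [mem_union]; push_neg; exact ⟨hiL, hiC⟩
    have d := dim_lemma hel (L ∪ C) (K ∪ C) i hKC hiLC
    rw [union_insert, union_insert]
    linarith

/-- The polymatroidal axioms (nonnegativity, monotonicity, submodularity) for a
set function h on 2^{N_n} with h(∅) = 0 are equivalent to the elemental
inequalities. -/
theorem polymatroid_axioms_iff_elemental (n : ℕ) (h : Finset (Fin n) → ℝ)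
    (h0 : h ∅ = 0) :
    ((∀ A : Finset (Fin n), 0 ≤ h A) ∧
     (∀ A B : Finset (Fin n), A ⊆ B → h A ≤ h B) ∧
     (∀ A B : Finset (Fin n), h (A ∩ B) + h (A ∪ B) ≤ h A + h B))
    ↔
    ((∀ i : Fin n, h (Finset.univ.erase i) ≤ h Finset.univ) ∧
     (∀ i j : Fin n, ∀ K : Finset (Fin n), i ≠ j → i ∉ K → j ∉ K →
        h K + h (insert i (insert j K)) ≤ h (insert i K) + h (insert j K))) := by
  constructor
  · rintro ⟨_, hmono, hsub⟩
    refine ⟨fun i => hmono _ _ (erase_subset _ _), fun i j K hij hiK hjK => ?_⟩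
    have h1 : insert i K ∩ insert j K = K := by
      ext x
      simp only [mem_inter, mem_insert]
      constructor
      · rintro ⟨hx1 | hx1, hx2 | hx2⟩
        · exact absurd (hx1.symm.trans hx2) hij
        · exact hx2
        · exact hx1
        · exact hx1
      · exact fun hx => ⟨Or.inr hx, Or.inr hx⟩
    have h2 : insert i K ∪ insert j K = insert i (insert j K) := by
      rw [insert_union, union_insert, union_self]
    have := hsub (insert i K) (insert j K)
    rw [h1, h2] at this
    linarith
  · rintro ⟨htop, hel⟩
    have hsub : ∀ A B : Finset (Fin n), h (A ∩ B) + h (A ∪ B) ≤ h A + h B := by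
      intro A B
      have hd : Disjoint (B \ A) A := sdiff_disjoint
      have := gen_lemma hel (B \ A) (A ∩ B) A inter_subset_left hd
      have hBA : B ∩ A ∪ B \ A = B := by
        ext x; simp only [mem_union, mem_inter, mem_sdiff]; tauto
      rw [union_sdiff_self_eq_union, inter_comm, hBA] at this
      rw [inter_comm A B]
      linarith
    have hstep : ∀ (i : Fin n) (A : Finset (Fin n)), i ∉ A → h A ≤ h (insert i A) := by
      intro i A hiA
      have d := dim_lemma hel (univ.erase i) A i
        (subset_erase.mpr ⟨subset_univ A, hiA⟩) (notMem_erase i univ)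
      rw [insert_erase (mem_univ i)] at d
      have := htop i
      linarith
    have hmono' : ∀ (C A : Finset (Fin n)), Disjoint C A → h A ≤ h (A ∪ C) := by
      intro C
      induction C using Finset.induction_on with
      | empty => intro A _; simp
      | @insert i C hiC ihC =>
        intro A hdis
        rw [disjoint_insert_left] at hdis
        obtain ⟨hiA, hdC⟩ := hdis
        have IH := ihC A hdC
        have hiAC : i ∉ A ∪ C := by
          rw [mem_union]; push_neg; exact ⟨hiA, hiC⟩
        have := hstep i (A ∪ C) hiAC
        rw [union_insert]
        linarith
    have hmono : ∀ A B : Finset (Fin n), A ⊆ B → h A ≤ h B := by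
      intro A B hAB
      have := hmono' (B \ A) A sdiff_disjoint
      rwa [union_sdiff_self_eq_union, union_eq_right.mpr hAB] at this
    exact ⟨fun A => h0 ▸ hmono ∅ A (empty_subset A), hmono, hsub⟩
end

section
/- Let h = a·r₁ + b·r₂ where r₁ is the rank function of the matroid U^{123}_{2,3} on N_4 (rank function A ↦ min(2, |A ∩ {1,2,3}|)) and r₂ is the rank function of U^{1}_{1,1} (A ↦ min(1, |A ∩ {1}|)), with a, b ≥ 0. If h is an entropy function, then a = log k for some positive integer k. -/
open Finset

/-- Probability that the discrete random variable `Y` (on finite sample space `Ω`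
with pmf `p`) takes the value `s`. -/
noncomputable def pr {Ω : Type} [Fintype Ω] {S : Type} [DecidableEq S]
    (p : Ω → ℝ) (Y : Ω → S) (s : S) : ℝ := ∑ ω, if Y ω = s then p ω else 0

/-- Shannon entropy (base 2) of the discrete random variable `Y`. -/
noncomputable def ent {Ω : Type} [Fintype Ω] {S : Type} [DecidableEq S]
    (p : Ω → ℝ) (Y : Ω → S) : ℝ :=
  - ∑ s ∈ Finset.univ.image Y, pr p Y s * Real.logb 2 (pr p Y s)

/-- `h : 2^{N_n} → ℝ` is entropic: it is the entropy function of some random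
vector `(X_1, …, X_n)` on finite alphabets. -/
def IsEntropic (n : ℕ) (h : Finset (Fin n) → ℝ) : Prop :=
  ∃ (m : Fin n → ℕ) (p : (∀ i, Fin (m i)) → ℝ),
    (∀ x, 0 ≤ p x) ∧ (∑ x, p x) = 1 ∧
    ∀ A : Finset (Fin n), h A = ent p (fun x (i : A) => x i.1)

/-- Rank function of the matroid U^{B}_{k,|B|} on N₄ = {0,1,2,3}:
A ↦ min(k, |A ∩ B|); elements outside B are loops. -/
noncomputable def rkU (k : ℕ) (B : Finset (Fin 4)) (A : Finset (Fin 4)) : ℝ :=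
  min (k : ℝ) ((A ∩ B).card : ℝ)

section aux
variable {Ω : Type} [Fintype Ω] {S T : Type} [DecidableEq S] [DecidableEq T]
variable (p : Ω → ℝ)

lemma pr_nonneg (hp : ∀ ω, 0 ≤ p ω) (Y : Ω → S) (s : S) : 0 ≤ pr p Y s := by
  refine Finset.sum_nonneg fun ω _ => ?_
  split
  · exact hp ω
  · exact le_refl 0

lemma pr_eq_zero_of_not_mem (Y : Ω → S) {s : S} (h : s ∉ Finset.univ.image Y) :
    pr p Y s = 0 := by
  refine Finset.sum_eq_zero fun ω _ => ?_
  rw [if_neg]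
  intro he
  exact h (Finset.mem_image.2 ⟨ω, Finset.mem_univ ω, he⟩)

lemma ent_eq_sum_univ [Fintype S] (Y : Ω → S) :
    ent p Y = - ∑ s, pr p Y s * Real.logb 2 (pr p Y s) := by
  rw [ent]
  congr 1
  apply Finset.sum_subset (Finset.subset_univ _)
  intro s _ hs
  rw [pr_eq_zero_of_not_mem p Y hs, zero_mul]

lemma sum_pr [Fintype S] (Y : Ω → S) (h1 : ∑ x, p x = 1) : ∑ s, pr p Y s = 1 := by
  calc ∑ s, pr p Y s = ∑ ω, ∑ s, (if Y ω = s then p ω else 0) := Finset.sum_comm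
    _ = ∑ ω, p ω := Finset.sum_congr rfl fun ω _ => by simp
    _ = 1 := h1

lemma pr_comp_of_injective (g : S → T) (hg : Function.Injective g) (Y : Ω → S) (s : S) :
    pr p (g ∘ Y) (g s) = pr p Y s := by
  unfold pr
  refine Finset.sum_congr rfl fun ω _ => ?_
  simp [hg.eq_iff]

lemma ent_comp_of_injective (g : S → T) (hg : Function.Injective g) (Y : Ω → S) :
    ent p (g ∘ Y) = ent p Y := by
  unfold ent
  congr 1
  have himg : Finset.univ.image (g ∘ Y) = (Finset.univ.image Y).image g := by
    rw [Finset.image_image]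
  rw [himg, Finset.sum_image (fun x _ y _ h => hg h)]
  refine Finset.sum_congr rfl fun s _ => ?_
  rw [pr_comp_of_injective p g hg Y s]

lemma pr_fst [Fintype T] (Y : Ω → S) (Z : Ω → T) (s : S) :
    ∑ t, pr p (fun ω => (Y ω, Z ω)) (s, t) = pr p Y s := by
  unfold pr
  rw [Finset.sum_comm]
  refine Finset.sum_congr rfl fun ω _ => ?_
  simp only [Prod.mk.injEq]
  by_cases hY : Y ω = s
  · simp [hY]
  · simp [hY]

lemma pr_snd [Fintype S] (Y : Ω → S) (Z : Ω → T) (t : T) :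
    ∑ s, pr p (fun ω => (Y ω, Z ω)) (s, t) = pr p Z t := by
  unfold pr
  rw [Finset.sum_comm]
  refine Finset.sum_congr rfl fun ω _ => ?_
  simp only [Prod.mk.injEq]
  by_cases hZ : Z ω = t
  · simp [hZ]
  · simp [hZ]

end aux

section analytic
variable {Ω : Type} [Fintype Ω] {S T : Type} [DecidableEq S] [DecidableEq T]
variable (p : Ω → ℝ)

lemma pW_le_fst [Fintype T] (hp : ∀ ω, 0 ≤ p ω) (Y : Ω → S) (Z : Ω → T) (s : S) (t : T) :
    pr p (fun ω => (Y ω, Z ω)) (s, t) ≤ pr p Y s := by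
  rw [← pr_fst p Y Z s]
  exact Finset.single_le_sum (f := fun t' => pr p (fun ω => (Y ω, Z ω)) (s, t'))
    (fun t' _ => pr_nonneg p hp _ _) (Finset.mem_univ t)

lemma pW_le_snd [Fintype S] (hp : ∀ ω, 0 ≤ p ω) (Y : Ω → S) (Z : Ω → T) (s : S) (t : T) :
    pr p (fun ω => (Y ω, Z ω)) (s, t) ≤ pr p Z t := by
  rw [← pr_snd p Y Z t]
  exact Finset.single_le_sum (f := fun s' => pr p (fun ω => (Y ω, Z ω)) (s', t))
    (fun s' _ => pr_nonneg p hp _ _) (Finset.mem_univ s)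

lemma ent_pair_Y [Fintype S] [Fintype T] (Y : Ω → S) (Z : Ω → T) :
    ent p Y = - ∑ st : S × T,
      pr p (fun ω => (Y ω, Z ω)) st * Real.logb 2 (pr p Y st.1) := by
  rw [ent_eq_sum_univ, Fintype.sum_prod_type]
  congr 1
  refine Finset.sum_congr rfl fun s _ => ?_
  calc pr p Y s * Real.logb 2 (pr p Y s)
      = (∑ t, pr p (fun ω => (Y ω, Z ω)) (s, t)) * Real.logb 2 (pr p Y s) := by
        rw [pr_fst p Y Z s]
    _ = ∑ t, pr p (fun ω => (Y ω, Z ω)) (s, t) * Real.logb 2 (pr p Y s) :=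
        Finset.sum_mul _ _ _
    _ = ∑ t, pr p (fun ω => (Y ω, Z ω)) (s, t) * Real.logb 2 (pr p Y (s, t).1) := rfl

lemma ent_pair_Z [Fintype S] [Fintype T] (Y : Ω → S) (Z : Ω → T) :
    ent p Z = - ∑ st : S × T,
      pr p (fun ω => (Y ω, Z ω)) st * Real.logb 2 (pr p Z st.2) := by
  rw [ent_eq_sum_univ, Fintype.sum_prod_type, Finset.sum_comm]
  congr 1
  refine Finset.sum_congr rfl fun t _ => ?_
  calc pr p Z t * Real.logb 2 (pr p Z t)
      = (∑ s, pr p (fun ω => (Y ω, Z ω)) (s, t)) * Real.logb 2 (pr p Z t) := by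
        rw [pr_snd p Y Z t]
    _ = ∑ s, pr p (fun ω => (Y ω, Z ω)) (s, t) * Real.logb 2 (pr p Z t) :=
        Finset.sum_mul _ _ _
    _ = ∑ s, pr p (fun ω => (Y ω, Z ω)) (s, t) * Real.logb 2 (pr p Z (s, t).2) := rfl

lemma indep_of_ent_eq [Fintype S] [Fintype T] (hp : ∀ ω, 0 ≤ p ω) (hp1 : ∑ x, p x = 1)
    (Y : Ω → S) (Z : Ω → T)
    (h : ent p (fun ω => (Y ω, Z ω)) = ent p Y + ent p Z) (s : S) (t : T) :
    pr p (fun ω => (Y ω, Z ω)) (s, t) = pr p Y s * pr p Z t := by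
  set W : Ω → S × T := fun ω => (Y ω, Z ω) with hWdef
  set q : S × T → ℝ := fun st => pr p Y st.1 * pr p Z st.2 with hqdef
  have hWnn : ∀ st : S × T, 0 ≤ pr p W st := fun st => pr_nonneg p hp W st
  have hqnn : ∀ st : S × T, 0 ≤ q st := fun st =>
    mul_nonneg (pr_nonneg p hp Y _) (pr_nonneg p hp Z _)
  have hle1 : ∀ st : S × T, pr p W st ≤ pr p Y st.1 := fun st => pW_le_fst p hp Y Z st.1 st.2
  have hle2 : ∀ st : S × T, pr p W st ≤ pr p Z st.2 := fun st => pW_le_snd p hp Y Z st.1 st.2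
  -- the `logb` identity from the entropy hypothesis
  have hmain : ∑ st : S × T, pr p W st * Real.logb 2 (pr p W st)
      = ∑ st : S × T, pr p W st * Real.logb 2 (q st) := by
    have e1 : ent p W = - ∑ st : S × T, pr p W st * Real.logb 2 (pr p W st) :=
      ent_eq_sum_univ p W
    have e2 := ent_pair_Y p Y Z
    have e3 := ent_pair_Z p Y Z
    rw [e1, e2, e3] at h
    have h' : ∑ st : S × T, pr p W st * Real.logb 2 (pr p W st)
        = ∑ st : S × T, (pr p W st * Real.logb 2 (pr p Y st.1)
          + pr p W st * Real.logb 2 (pr p Z st.2)) := by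
      rw [Finset.sum_add_distrib]; linarith
    rw [h']
    refine Finset.sum_congr rfl fun st _ => ?_
    rcases eq_or_lt_of_le (hWnn st) with h0 | h0
    · rw [← h0]; ring
    · have hy : 0 < pr p Y st.1 := lt_of_lt_of_le h0 (hle1 st)
      have hz : 0 < pr p Z st.2 := lt_of_lt_of_le h0 (hle2 st)
      rw [hqdef]
      rw [Real.logb_mul hy.ne' hz.ne']
      ring
  -- pass to natural logarithms
  have hL : Real.log 2 ≠ 0 := (Real.log_pos one_lt_two).ne'
  have hmain2 : ∑ st : S × T, pr p W st * Real.log (pr p W st)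
      = ∑ st : S × T, pr p W st * Real.log (q st) := by
    have h2 := hmain
    simp only [Real.logb, ← mul_div_assoc, ← Finset.sum_div] at h2
    exact (div_left_inj' hL).1 h2
  -- termwise inequality
  have key : ∀ st : S × T,
      pr p W st * Real.log (q st) - pr p W st * Real.log (pr p W st) ≤ q st - pr p W st := by
    intro st
    rcases eq_or_lt_of_le (hWnn st) with h0 | h0
    · rw [← h0]; simpa using hqnn st
    · have hq0 : 0 < q st :=
        mul_pos (lt_of_lt_of_le h0 (hle1 st)) (lt_of_lt_of_le h0 (hle2 st))
      have hlog := Real.log_le_sub_one_of_pos (div_pos hq0 h0)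
      rw [Real.log_div hq0.ne' h0.ne'] at hlog
      have := mul_le_mul_of_nonneg_left hlog h0.le
      have hcan : pr p W st * (q st / pr p W st - 1) = q st - pr p W st := by
        rw [mul_sub, mul_div_cancel₀ _ h0.ne', mul_one]
      nlinarith [this, hcan]
  -- sums of both sides are equal (both zero)
  have hsq : ∑ st : S × T, q st = 1 := by
    rw [Fintype.sum_prod_type]
    simp only [hqdef]
    simp_rw [← Finset.mul_sum]
    rw [sum_pr p Z hp1]
    simpa using sum_pr p Y hp1
  have hsW : ∑ st : S × T, pr p W st = 1 := sum_pr p W hp1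
  have hsums : ∑ st : S × T,
      (pr p W st * Real.log (q st) - pr p W st * Real.log (pr p W st))
      = ∑ st : S × T, (q st - pr p W st) := by
    rw [Finset.sum_sub_distrib, Finset.sum_sub_distrib, hmain2, hsq, hsW]
    norm_num
  have heach := (Finset.sum_eq_sum_iff_of_le fun st _ => key st).1 hsums (s, t) (Finset.mem_univ _)
  -- conclude
  rcases eq_or_lt_of_le (hWnn (s, t)) with h0 | h0
  · have : q (s, t) = 0 := by rw [← h0] at heach; simpa using heach.symm
    rw [← h0, ← this]
  · have hq0 : 0 < q (s, t) :=
      mul_pos (lt_of_lt_of_le h0 (hle1 (s, t))) (lt_of_lt_of_le h0 (hle2 (s, t)))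
    by_contra hne
    have hne' : q (s, t) / pr p W (s, t) ≠ 1 := by
      intro h1
      exact hne ((div_eq_one_iff_eq h0.ne').1 h1).symm
    have hlog := Real.log_lt_sub_one_of_pos (div_pos hq0 h0) hne'
    rw [Real.log_div hq0.ne' h0.ne'] at hlog
    have := mul_lt_mul_of_pos_left hlog h0
    have hcan : pr p W (s, t) * (q (s, t) / pr p W (s, t) - 1) = q (s, t) - pr p W (s, t) := by
      rw [mul_sub, mul_div_cancel₀ _ h0.ne', mul_one]
    nlinarith [this, hcan, heach]

lemma det_of_ent_eq [Fintype S] [Fintype T] (hp : ∀ ω, 0 ≤ p ω)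
    (Y : Ω → S) (Z : Ω → T)
    (h : ent p (fun ω => (Y ω, Z ω)) = ent p Y) (s : S) (t t' : T)
    (h1 : 0 < pr p (fun ω => (Y ω, Z ω)) (s, t))
    (h2 : 0 < pr p (fun ω => (Y ω, Z ω)) (s, t')) : t = t' := by
  set W : Ω → S × T := fun ω => (Y ω, Z ω) with hWdef
  have hWnn : ∀ st : S × T, 0 ≤ pr p W st := fun st => pr_nonneg p hp W st
  have hle1 : ∀ st : S × T, pr p W st ≤ pr p Y st.1 := fun st => pW_le_fst p hp Y Z st.1 st.2
  have hmain : ∑ st : S × T, pr p W st * Real.logb 2 (pr p W st)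
      = ∑ st : S × T, pr p W st * Real.logb 2 (pr p Y st.1) := by
    have e1 : ent p W = - ∑ st : S × T, pr p W st * Real.logb 2 (pr p W st) :=
      ent_eq_sum_univ p W
    have e2 := ent_pair_Y p Y Z
    rw [e1, e2] at h
    linarith
  have key : ∀ st : S × T,
      pr p W st * Real.logb 2 (pr p W st) ≤ pr p W st * Real.logb 2 (pr p Y st.1) := by
    intro st
    rcases eq_or_lt_of_le (hWnn st) with h0 | h0
    · rw [← h0]; simp
    · exact mul_le_mul_of_nonneg_left
        (Real.logb_le_logb_of_le one_lt_two h0 (hle1 st)) h0.le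
  have heach := (Finset.sum_eq_sum_iff_of_le fun st _ => key st).1 hmain
  -- positive entries equal the marginal
  have hval : ∀ t₀ : T, 0 < pr p W (s, t₀) → pr p W (s, t₀) = pr p Y s := by
    intro t₀ h0
    have he := heach (s, t₀) (Finset.mem_univ _)
    have hy : 0 < pr p Y s := lt_of_lt_of_le h0 (hle1 (s, t₀))
    have hlogeq : Real.logb 2 (pr p W (s, t₀)) = Real.logb 2 (pr p Y s) :=
      mul_left_cancel₀ h0.ne' he
    exact Real.logb_injOn_pos one_lt_two (Set.mem_Ioi.2 h0) (Set.mem_Ioi.2 hy) hlogeq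
  by_contra hne
  have hyb : 0 < pr p Y s := lt_of_lt_of_le h1 (hle1 (s, t))
  have hsum : pr p W (s, t) + pr p W (s, t') ≤ pr p Y s := by
    rw [← pr_fst p Y Z s]
    calc pr p W (s, t) + pr p W (s, t')
        = ∑ t₀ ∈ ({t, t'} : Finset T), pr p W (s, t₀) := by
          rw [Finset.sum_pair hne]
      _ ≤ ∑ t₀ : T, pr p W (s, t₀) := Finset.sum_le_sum_of_subset_of_nonneg
          (Finset.subset_univ _) (fun t₀ _ _ => hWnn (s, t₀))
  rw [hval t h1, hval t' h2] at hsum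
  linarith

end analytic

section bridge
variable (m : Fin 4 → ℕ) (p : (∀ i, Fin (m i)) → ℝ)

lemma bridge1 (i : Fin 4) :
    ent p (fun x (j : ({i} : Finset (Fin 4))) => x j.1) = ent p (fun x => x i) := by
  have hmem : i ∈ ({i} : Finset (Fin 4)) := Finset.mem_singleton_self i
  have hg : Function.Injective
      (fun v : ((j : ({i} : Finset (Fin 4))) → Fin (m j.1)) => v ⟨i, hmem⟩) := by
    intro u v h
    funext j
    obtain ⟨j, hj⟩ := j
    obtain rfl : j = i := Finset.mem_singleton.1 hj
    exact h
  exact (ent_comp_of_injective p _ hg _).symm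

lemma bridge2 (i j : Fin 4) :
    ent p (fun x (k : ({i, j} : Finset (Fin 4))) => x k.1)
      = ent p (fun x => (x i, x j)) := by
  have hi : i ∈ ({i, j} : Finset (Fin 4)) := Finset.mem_insert_self i {j}
  have hj : j ∈ ({i, j} : Finset (Fin 4)) :=
    Finset.mem_insert_of_mem (Finset.mem_singleton_self j)
  have hg : Function.Injective
      (fun v : ((k : ({i, j} : Finset (Fin 4))) → Fin (m k.1)) =>
        (v ⟨i, hi⟩, v ⟨j, hj⟩)) := by
    intro u v h
    rw [Prod.mk.injEq] at h
    funext k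
    obtain ⟨k, hk⟩ := k
    rcases Finset.mem_insert.1 hk with rfl | hk'
    · exact h.1
    · obtain rfl := Finset.mem_singleton.1 hk'
      exact h.2
  exact (ent_comp_of_injective p _ hg _).symm

lemma bridge3 :
    ent p (fun x (k : ({0, 1, 2} : Finset (Fin 4))) => x k.1)
      = ent p (fun x => ((x 0, x 1), x 2)) := by
  have h0 : (0 : Fin 4) ∈ ({0, 1, 2} : Finset (Fin 4)) := by decide
  have h1 : (1 : Fin 4) ∈ ({0, 1, 2} : Finset (Fin 4)) := by decide
  have h2 : (2 : Fin 4) ∈ ({0, 1, 2} : Finset (Fin 4)) := by decide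
  have hg : Function.Injective
      (fun v : ((k : ({0, 1, 2} : Finset (Fin 4))) → Fin (m k.1)) =>
        ((v ⟨0, h0⟩, v ⟨1, h1⟩), v ⟨2, h2⟩)) := by
    intro u v h
    simp only [Prod.mk.injEq] at h
    funext k
    obtain ⟨k, hk⟩ := k
    rcases Finset.mem_insert.1 hk with rfl | hk'
    · exact h.1.1
    rcases Finset.mem_insert.1 hk' with rfl | hk''
    · exact h.1.2
    obtain rfl := Finset.mem_singleton.1 hk''
    exact h.2
  exact (ent_comp_of_injective p _ hg _).symm

end bridge

/-- If h = a·r(U^{123}_{2,3}) + b·r(U^{1}_{1,1}) is entropic (a, b ≥ 0), then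
a = log₂ k for some positive integer k. (Only-if part of Theorem 3 for the
face (U^{123}_{2,3}, U^{1}_{1,1}).) -/
theorem face_U123_23_U1_11_only_if (a b : ℝ) (ha : 0 ≤ a) (hb : 0 ≤ b)
    (hent : IsEntropic 4
      (fun A => a * rkU 2 ({0,1,2} : Finset (Fin 4)) A +
                b * rkU 1 ({0} : Finset (Fin 4)) A)) :
    ∃ k : ℕ, 0 < k ∧ a = Real.logb 2 k := by
  obtain ⟨m, p, hp0, hp1, hA⟩ := hent
  -- rank values
  have r1 : ∀ A : Finset (Fin 4), rkU 2 ({0,1,2} : Finset (Fin 4)) A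
      = min (2:ℝ) ((A ∩ ({0,1,2} : Finset (Fin 4))).card : ℝ) := by
    intro A; simp [rkU]
  -- entropy values
  have h1v : ent p (fun x => x 1) = a := by
    have h := hA {1}
    rw [bridge1 m p 1] at h
    rw [← h]
    simp only [rkU]
    rw [show ((({1}:Finset (Fin 4)) ∩ ({0,1,2}:Finset (Fin 4))).card) = 1 from by decide,
      show ((({1}:Finset (Fin 4)) ∩ ({0}:Finset (Fin 4))).card) = 0 from by decide]
    norm_num
  have h2v : ent p (fun x => x 2) = a := by
    have h := hA {2}
    rw [bridge1 m p 2] at h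
    rw [← h]
    simp only [rkU]
    rw [show ((({2}:Finset (Fin 4)) ∩ ({0,1,2}:Finset (Fin 4))).card) = 1 from by decide,
      show ((({2}:Finset (Fin 4)) ∩ ({0}:Finset (Fin 4))).card) = 0 from by decide]
    norm_num
  have h0v : ent p (fun x => x 0) = a + b := by
    have h := hA {0}
    rw [bridge1 m p 0] at h
    rw [← h]
    simp only [rkU]
    rw [show ((({0}:Finset (Fin 4)) ∩ ({0,1,2}:Finset (Fin 4))).card) = 1 from by decide,
      show ((({0}:Finset (Fin 4)) ∩ ({0}:Finset (Fin 4))).card) = 1 from by decide]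
    norm_num
  have h12v : ent p (fun x => (x 1, x 2)) = a + a := by
    have h := hA {1, 2}
    rw [bridge2 m p 1 2] at h
    rw [← h]
    simp only [rkU]
    rw [show ((({1,2}:Finset (Fin 4)) ∩ ({0,1,2}:Finset (Fin 4))).card) = 2 from by decide,
      show ((({1,2}:Finset (Fin 4)) ∩ ({0}:Finset (Fin 4))).card) = 0 from by decide]
    norm_num
    ring
  have h01v : ent p (fun x => (x 0, x 1)) = a + a + b := by
    have h := hA {0, 1}
    rw [bridge2 m p 0 1] at h
    rw [← h]
    simp only [rkU]
    rw [show ((({0,1}:Finset (Fin 4)) ∩ ({0,1,2}:Finset (Fin 4))).card) = 2 from by decide,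
      show ((({0,1}:Finset (Fin 4)) ∩ ({0}:Finset (Fin 4))).card) = 1 from by decide]
    norm_num
    ring
  have h02v : ent p (fun x => (x 0, x 2)) = a + a + b := by
    have h := hA {0, 2}
    rw [bridge2 m p 0 2] at h
    rw [← h]
    simp only [rkU]
    rw [show ((({0,2}:Finset (Fin 4)) ∩ ({0,1,2}:Finset (Fin 4))).card) = 2 from by decide,
      show ((({0,2}:Finset (Fin 4)) ∩ ({0}:Finset (Fin 4))).card) = 1 from by decide]
    norm_num
    ring
  have h012v : ent p (fun x => ((x 0, x 1), x 2)) = a + a + b := by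
    have h := hA {0, 1, 2}
    rw [bridge3 m p] at h
    rw [← h]
    simp only [rkU]
    rw [show ((({0,1,2}:Finset (Fin 4)) ∩ ({0,1,2}:Finset (Fin 4))).card) = 3 from by decide,
      show ((({0,1,2}:Finset (Fin 4)) ∩ ({0}:Finset (Fin 4))).card) = 1 from by decide]
    norm_num
    ring
  -- swap / assoc auxiliary maps
  have hσ : Function.Injective
      (fun y : (Fin (m 0) × Fin (m 1)) × Fin (m 2) => ((y.1.1, y.2), y.1.2)) := by
    intro u v h
    obtain ⟨⟨a1, b1⟩, c1⟩ := u
    obtain ⟨⟨a2, b2⟩, c2⟩ := v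
    simp only [Prod.mk.injEq] at h ⊢
    tauto
  have hτ : Function.Injective
      (fun y : (Fin (m 0) × Fin (m 1)) × Fin (m 2) => (y.1.1, (y.1.2, y.2))) := by
    intro u v h
    obtain ⟨⟨a1, b1⟩, c1⟩ := u
    obtain ⟨⟨a2, b2⟩, c2⟩ := v
    simp only [Prod.mk.injEq] at h ⊢
    tauto
  have eswap : ent p (fun x => ((x 0, x 2), x 1)) = ent p (fun x => ((x 0, x 1), x 2)) :=
    ent_comp_of_injective p _ hσ (fun x => ((x 0, x 1), x 2))
  have hswap : ∀ (y0 : Fin (m 0)) (y1 : Fin (m 1)) (y2 : Fin (m 2)),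
      pr p (fun x => ((x 0, x 2), x 1)) ((y0, y2), y1)
        = pr p (fun x => ((x 0, x 1), x 2)) ((y0, y1), y2) :=
    fun y0 y1 y2 => pr_comp_of_injective p _ hσ (fun x => ((x 0, x 1), x 2)) ((y0, y1), y2)
  have hassoc : ∀ (y0 : Fin (m 0)) (y1 : Fin (m 1)) (y2 : Fin (m 2)),
      pr p (fun x => (x 0, (x 1, x 2))) (y0, (y1, y2))
        = pr p (fun x => ((x 0, x 1), x 2)) ((y0, y1), y2) :=
    fun y0 y1 y2 => pr_comp_of_injective p _ hτ (fun x => ((x 0, x 1), x 2)) ((y0, y1), y2)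
  -- independences
  have hq12 : ∀ s t, pr p (fun x => (x 1, x 2)) (s, t)
      = pr p (fun x => x 1) s * pr p (fun x => x 2) t :=
    indep_of_ent_eq p hp0 hp1 (fun x => x 1) (fun x => x 2)
      (by show ent p (fun x => (x 1, x 2)) = ent p (fun x => x 1) + ent p (fun x => x 2)
          rw [h12v, h1v, h2v])
  have hq01 : ∀ s t, pr p (fun x => (x 0, x 1)) (s, t)
      = pr p (fun x => x 0) s * pr p (fun x => x 1) t :=
    indep_of_ent_eq p hp0 hp1 (fun x => x 0) (fun x => x 1)
      (by show ent p (fun x => (x 0, x 1)) = ent p (fun x => x 0) + ent p (fun x => x 1)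
          rw [h01v, h0v, h1v]; ring)
  have hq02 : ∀ s t, pr p (fun x => (x 0, x 2)) (s, t)
      = pr p (fun x => x 0) s * pr p (fun x => x 2) t :=
    indep_of_ent_eq p hp0 hp1 (fun x => x 0) (fun x => x 2)
      (by show ent p (fun x => (x 0, x 2)) = ent p (fun x => x 0) + ent p (fun x => x 2)
          rw [h02v, h0v, h2v]; ring)
  -- functional dependences
  have hdet12 : ∀ (y0 : Fin (m 0)) (y1 : Fin (m 1)) (t t' : Fin (m 2)),
      0 < pr p (fun x => ((x 0, x 1), x 2)) ((y0, y1), t) →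
      0 < pr p (fun x => ((x 0, x 1), x 2)) ((y0, y1), t') → t = t' :=
    fun y0 y1 t t' h1 h2 => det_of_ent_eq p hp0 (fun x => (x 0, x 1)) (fun x => x 2)
      (by show ent p (fun x => ((x 0, x 1), x 2)) = ent p (fun x => (x 0, x 1))
          rw [h012v, h01v]) (y0, y1) t t' h1 h2
  have hdet21 : ∀ (y0 : Fin (m 0)) (y2 : Fin (m 2)) (s s' : Fin (m 1)),
      0 < pr p (fun x => ((x 0, x 2), x 1)) ((y0, y2), s) →
      0 < pr p (fun x => ((x 0, x 2), x 1)) ((y0, y2), s') → s = s' :=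
    fun y0 y2 s s' h1 h2 => det_of_ent_eq p hp0 (fun x => (x 0, x 2)) (fun x => x 1)
      (by show ent p (fun x => ((x 0, x 2), x 1)) = ent p (fun x => (x 0, x 2))
          rw [eswap, h012v, h02v]) (y0, y2) s s' h1 h2
  -- the key claim : all positive values of pr₁ and pr₂ agree
  have hkey : ∀ s t, 0 < pr p (fun x => x 1) s → 0 < pr p (fun x => x 2) t →
      pr p (fun x => x 1) s = pr p (fun x => x 2) t := by
    intro s t hs ht
    have h12pos : (0:ℝ) < pr p (fun x => (x 1, x 2)) (s, t) := by
      rw [hq12 s t]; exact mul_pos hs ht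
    have hsum : ∑ y0, pr p (fun x => (x 0, (x 1, x 2))) (y0, (s, t))
        = pr p (fun x => (x 1, x 2)) (s, t) :=
      pr_snd p (fun x => x 0) (fun x => (x 1, x 2)) (s, t)
    have hex : ∃ y0, pr p (fun x => (x 0, (x 1, x 2))) (y0, (s, t)) ≠ 0 := by
      by_contra hc
      push_neg at hc
      rw [Finset.sum_eq_zero (fun y0 _ => hc y0)] at hsum
      linarith
    obtain ⟨y0, hy0⟩ := hex
    have hWpos : 0 < pr p (fun x => ((x 0, x 1), x 2)) ((y0, s), t) := by
      rw [← hassoc y0 s t]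
      exact lt_of_le_of_ne (pr_nonneg p hp0 _ _) (Ne.symm hy0)
    -- p01 value
    have hm01 : ∑ x2, pr p (fun x => ((x 0, x 1), x 2)) ((y0, s), x2)
        = pr p (fun x => (x 0, x 1)) (y0, s) :=
      pr_fst p (fun x => (x 0, x 1)) (fun x => x 2) (y0, s)
    have hs01 : ∑ x2, pr p (fun x => ((x 0, x 1), x 2)) ((y0, s), x2)
        = pr p (fun x => ((x 0, x 1), x 2)) ((y0, s), t) := by
      apply Finset.sum_eq_single_of_mem t (Finset.mem_univ t)
      intro x2 _ hne
      by_contra hne0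
      exact hne (hdet12 y0 s x2 t
        (lt_of_le_of_ne (pr_nonneg p hp0 _ _) (Ne.symm hne0)) hWpos)
    have h01val : pr p (fun x => (x 0, x 1)) (y0, s)
        = pr p (fun x => ((x 0, x 1), x 2)) ((y0, s), t) := hm01.symm.trans hs01
    -- p02 value
    have hW'pos : 0 < pr p (fun x => ((x 0, x 2), x 1)) ((y0, t), s) := by
      rw [hswap y0 s t]; exact hWpos
    have hm02 : ∑ x1, pr p (fun x => ((x 0, x 2), x 1)) ((y0, t), x1)
        = pr p (fun x => (x 0, x 2)) (y0, t) :=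
      pr_fst p (fun x => (x 0, x 2)) (fun x => x 1) (y0, t)
    have hs02 : ∑ x1, pr p (fun x => ((x 0, x 2), x 1)) ((y0, t), x1)
        = pr p (fun x => ((x 0, x 2), x 1)) ((y0, t), s) := by
      apply Finset.sum_eq_single_of_mem s (Finset.mem_univ s)
      intro x1 _ hne
      by_contra hne0
      exact hne (hdet21 y0 t x1 s
        (lt_of_le_of_ne (pr_nonneg p hp0 _ _) (Ne.symm hne0)) hW'pos)
    have h02val : pr p (fun x => (x 0, x 2)) (y0, t)
        = pr p (fun x => ((x 0, x 1), x 2)) ((y0, s), t) :=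
      (hm02.symm.trans hs02).trans (hswap y0 s t)
    have e1 : pr p (fun x => x 0) y0 * pr p (fun x => x 1) s
        = pr p (fun x => ((x 0, x 1), x 2)) ((y0, s), t) := by
      rw [← hq01 y0 s]; exact h01val
    have e2 : pr p (fun x => x 0) y0 * pr p (fun x => x 2) t
        = pr p (fun x => ((x 0, x 1), x 2)) ((y0, s), t) := by
      rw [← hq02 y0 t]; exact h02val
    have h0ne : pr p (fun x => x 0) y0 ≠ 0 := by
      intro h
      rw [h, zero_mul] at e1
      exact hWpos.ne' e1.symm
    exact mul_left_cancel₀ h0ne (e1.trans e2.symm)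
  -- finish
  have hsum1 : ∑ s, pr p (fun x => x 1) s = 1 := sum_pr p _ hp1
  have hsum2 : ∑ t, pr p (fun x => x 2) t = 1 := sum_pr p _ hp1
  have hex2 : ∃ t, 0 < pr p (fun x => x 2) t := by
    by_contra hc
    push_neg at hc
    have : ∑ t, pr p (fun x => x 2) t = 0 :=
      Finset.sum_eq_zero fun t _ => le_antisymm (hc t) (pr_nonneg p hp0 _ _)
    rw [this] at hsum2
    norm_num at hsum2
  obtain ⟨t0, ht0⟩ := hex2
  set c : ℝ := pr p (fun x => x 2) t0 with hcdef
  set F : Finset (Fin (m 1)) := Finset.univ.filter (fun s => 0 < pr p (fun x => x 1) s)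
    with hFdef
  have hF : ∀ s ∈ F, pr p (fun x => x 1) s = c := fun s hs =>
    hkey s t0 (Finset.mem_filter.1 hs).2 ht0
  have hzero : ∀ s, s ∉ F → pr p (fun x => x 1) s = 0 := by
    intro s hs
    have hn : ¬ 0 < pr p (fun x => x 1) s := by
      intro hpos
      exact hs (Finset.mem_filter.2 ⟨Finset.mem_univ s, hpos⟩)
    exact le_antisymm (not_lt.1 hn) (pr_nonneg p hp0 _ _)
  have hsumF : ∑ s ∈ F, pr p (fun x => x 1) s = 1 := by
    rw [← hsum1]
    apply Finset.sum_subset (Finset.filter_subset _ _)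
    intro s _ hs
    exact hzero s hs
  have hcard : (F.card : ℝ) * c = 1 := by
    rw [← hsumF, Finset.sum_congr rfl hF, Finset.sum_const, nsmul_eq_mul]
  have hkpos : 0 < F.card := by
    rcases Nat.eq_zero_or_pos F.card with h | h
    · rw [h] at hcard; norm_num at hcard
    · exact h
  have hcne : (F.card : ℝ) ≠ 0 := Nat.cast_ne_zero.2 hkpos.ne'
  -- compute a
  have ha2 : a = -((F.card : ℝ) * (c * Real.logb 2 c)) := by
    rw [← h1v, ent_eq_sum_univ]
    have hres : ∑ s, pr p (fun x => x 1) s * Real.logb 2 (pr p (fun x => x 1) s)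
        = ∑ s ∈ F, pr p (fun x => x 1) s * Real.logb 2 (pr p (fun x => x 1) s) := by
      symm
      apply Finset.sum_subset (Finset.filter_subset _ _)
      intro s _ hs
      rw [hzero s hs, zero_mul]
    rw [hres, Finset.sum_congr rfl (fun s hs => by rw [hF s hs]), Finset.sum_const,
      nsmul_eq_mul]
  have hlogc : Real.logb 2 ((F.card : ℝ) * c) = 0 := by rw [hcard]; exact Real.logb_one
  rw [Real.logb_mul hcne ht0.ne'] at hlogc
  refine ⟨F.card, hkpos, ?_⟩
  have : (F.card : ℝ) * (c * Real.logb 2 c) = ((F.card : ℝ) * c) * Real.logb 2 c := by ring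
  rw [this, hcard, one_mul] at ha2
  linarith
end

section
/- Let h = a·r₁ + b·r₂ where r₁ and r₂ are the rank functions of U^{123}_{2,3} and U^{124}_{2,3} on N_4, with a, b ≥ 0. Then h is entropic if and only if a = log k₁ and b = log k₂ for some positive integers k₁, k₂. -/
open Finset

set_option linter.unusedSectionVars false

namespace FaceAux

section generic

lemma ent_eq_sum {Ω : Type} [Fintype Ω] {S : Type} [DecidableEq S]
    (p : Ω → ℝ) (Y : Ω → S) :
    ent p Y = - ∑ ω, p ω * Real.logb 2 (pr p Y (Y ω)) := by
  unfold ent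
  congr 1
  calc ∑ s ∈ Finset.univ.image Y, pr p Y s * Real.logb 2 (pr p Y s)
      = ∑ s ∈ Finset.univ.image Y, ∑ ω, (if Y ω = s then p ω * Real.logb 2 (pr p Y s) else 0) := by
        refine Finset.sum_congr rfl fun s _ => ?_
        rw [pr, Finset.sum_mul]
        exact Finset.sum_congr rfl fun ω _ => by split_ifs <;> simp
    _ = ∑ ω, ∑ s ∈ Finset.univ.image Y, (if Y ω = s then p ω * Real.logb 2 (pr p Y s) else 0) :=
        Finset.sum_comm
    _ = ∑ ω, p ω * Real.logb 2 (pr p Y (Y ω)) := by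
        refine Finset.sum_congr rfl fun ω _ => ?_
        rw [Finset.sum_ite_eq (Finset.univ.image Y) (Y ω)
          (fun s => p ω * Real.logb 2 (pr p Y s))]
        rw [if_pos (Finset.mem_image_of_mem Y (Finset.mem_univ ω))]

variable {n : ℕ} {m : Fin n → ℕ}

/-- marginal probability of the event "agrees with ω on A" -/
noncomputable def PP (p : (∀ i, Fin (m i)) → ℝ) (A : Finset (Fin n)) (ω : ∀ i, Fin (m i)) : ℝ :=
  ∑ ω', if ∀ i ∈ A, ω' i = ω i then p ω' else 0

lemma pr_restrict (p : (∀ i, Fin (m i)) → ℝ) (A : Finset (Fin n)) (ω : ∀ i, Fin (m i)) :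
    pr p (fun x (i : A) => x i.1) ((fun x (i : A) => x i.1) ω) = PP p A ω := by
  unfold pr PP
  refine Finset.sum_congr rfl fun ω' _ => ?_
  congr 1
  simp only [eq_iff_iff]
  constructor
  · intro h i hi
    exact congrFun h ⟨i, hi⟩
  · intro h
    funext i
    exact h i.1 i.2

lemma ent_restrict (p : (∀ i, Fin (m i)) → ℝ) (A : Finset (Fin n)) :
    ent p (fun x (i : A) => x i.1) = - ∑ ω, p ω * Real.logb 2 (PP p A ω) := by
  rw [ent_eq_sum]
  congr 1
  exact Finset.sum_congr rfl fun ω _ => by rw [pr_restrict]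



lemma PP_nonneg {p : (∀ i, Fin (m i)) → ℝ} (hp : ∀ x, 0 ≤ p x) (A : Finset (Fin n))
    (ω : ∀ i, Fin (m i)) : 0 ≤ PP p A ω :=
  Finset.sum_nonneg fun ω' _ => by split_ifs; exacts [hp ω', le_refl 0]

lemma le_PP {p : (∀ i, Fin (m i)) → ℝ} (hp : ∀ x, 0 ≤ p x) (A : Finset (Fin n))
    (ω : ∀ i, Fin (m i)) : p ω ≤ PP p A ω := by
  have h := Finset.single_le_sum (f := fun ω' => if ∀ i ∈ A, ω' i = ω i then p ω' else 0)
    (fun ω' _ => by split_ifs; exacts [hp ω', le_refl 0]) (Finset.mem_univ ω)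
  simpa [PP] using h

lemma PP_mono {p : (∀ i, Fin (m i)) → ℝ} (hp : ∀ x, 0 ≤ p x) {A B : Finset (Fin n)}
    (hAB : A ⊆ B) (ω : ∀ i, Fin (m i)) : PP p B ω ≤ PP p A ω := by
  refine Finset.sum_le_sum fun ω' _ => ?_
  by_cases h : ∀ i ∈ B, ω' i = ω i
  · rw [if_pos h, if_pos fun i hi => h i (hAB hi)]
  · rw [if_neg h]; split_ifs; exacts [hp ω', le_refl 0]

lemma PP_congr (p : (∀ i, Fin (m i)) → ℝ) {A S : Finset (Fin n)} (hAS : A ⊆ S)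
    {ω ω' : ∀ i, Fin (m i)} (h : ∀ i ∈ S, ω i = ω' i) : PP p A ω = PP p A ω' := by
  refine Finset.sum_congr rfl fun x _ => ?_
  congr 1
  simp only [eq_iff_iff]
  exact ⟨fun hx i hi => (hx i hi).trans (h i (hAS hi)),
         fun hx i hi => (hx i hi).trans (h i (hAS hi)).symm⟩

lemma cyl_card (S : Finset (Fin n)) (σ : ∀ i, Fin (m i)) :
    (Finset.univ.filter fun ω : ∀ i, Fin (m i) => ∀ i ∈ S, σ i = ω i).card
      = ∏ i ∈ Sᶜ, m i := by
  haveI : Fintype {x : Fin n // x ∉ S} := Subtype.fintype _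
  rw [← Fintype.card_subtype]
  have e : {ω : ∀ i, Fin (m i) // ∀ i ∈ S, σ i = ω i} ≃ (∀ i : {j : Fin n // j ∉ S}, Fin (m i.1)) :=
    { toFun := fun ω i => ω.1 i.1
      invFun := fun f => ⟨fun i => if h : i ∈ S then σ i else f ⟨i, h⟩,
        fun i hi => by dsimp only; rw [dif_pos hi]⟩
      left_inv := by
        rintro ⟨ω, hω⟩
        apply Subtype.ext
        funext i
        dsimp only
        split_ifs with h
        · exact hω i h
        · rfl
      right_inv := by
        intro f
        funext i
        exact dif_neg i.2 }
  rw [Fintype.card_congr e, Fintype.card_pi,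
    Finset.prod_subtype Sᶜ (fun x => Finset.mem_compl) (fun i => m i)]
  · simp
  · exact this

lemma sum_ite_const {α : Type} [Fintype α] (c : α → Prop) [DecidablePred c] (x : ℝ) :
    ∑ a, (if c a then x else 0) = ((Finset.univ.filter c).card : ℝ) * x := by
  rw [Finset.sum_ite, Finset.sum_const, Finset.sum_const_zero, add_zero, nsmul_eq_mul]

set_option maxHeartbeats 800000 in
/-- double-counting / swap lemma -/
lemma swap_sum (p : (∀ i, Fin (m i)) → ℝ) (S : Finset (Fin n)) (g : (∀ i, Fin (m i)) → ℝ)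
    (hg : ∀ ω ω', (∀ i ∈ S, ω i = ω' i) → g ω = g ω') :
    ∑ ω, PP p S ω * g ω = (∏ i ∈ Sᶜ, (m i : ℝ)) * ∑ ω, p ω * g ω := by
  unfold PP
  calc ∑ ω, (∑ ω', if ∀ i ∈ S, ω' i = ω i then p ω' else 0) * g ω
      = ∑ ω : ∀ i, Fin (m i), ∑ ω' : ∀ i, Fin (m i), (if ∀ i ∈ S, ω' i = ω i then p ω' * g ω' else 0) := by
        refine Finset.sum_congr rfl fun ω _ => ?_
        rw [Finset.sum_mul]
        refine Finset.sum_congr rfl fun ω' _ => ?_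
        by_cases h : ∀ i ∈ S, ω' i = ω i
        · rw [if_pos h, if_pos h, hg ω' ω h]
        · rw [if_neg h, if_neg h, zero_mul]
    _ = ∑ ω' : ∀ i, Fin (m i), ∑ ω : ∀ i, Fin (m i), (if ∀ i ∈ S, ω' i = ω i then p ω' * g ω' else 0) := Finset.sum_comm
    _ = ∑ ω', ((Finset.univ.filter fun ω : ∀ i, Fin (m i) => ∀ i ∈ S, ω' i = ω i).card : ℝ)
          * (p ω' * g ω') := by
        refine Finset.sum_congr rfl fun ω' _ => ?_
        exact sum_ite_const _ _
    _ = (∏ i ∈ Sᶜ, (m i : ℝ)) * ∑ ω, p ω * g ω := by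
        rw [Finset.mul_sum]
        refine Finset.sum_congr rfl fun ω' _ => ?_
        rw [cyl_card]
        push_cast
        ring

lemma sum_PP {p : (∀ i, Fin (m i)) → ℝ} (hp1 : ∑ x, p x = 1) (S : Finset (Fin n)) :
    ∑ ω, PP p S ω = ∏ i ∈ Sᶜ, (m i : ℝ) := by
  have := swap_sum p S (fun _ => 1) (fun _ _ _ => rfl)
  simpa [hp1] using this


end generic

section generic2
variable {n : ℕ} {m : Fin n → ℕ}
lemma pair_card {A B : Finset (Fin n)} (hd : Disjoint A B) (ω' ω'' : ∀ i, Fin (m i)) :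
    (Finset.univ.filter fun ω : ∀ i, Fin (m i) =>
       (∀ i ∈ A, ω' i = ω i) ∧ (∀ i ∈ B, ω'' i = ω i)).card = ∏ i ∈ (A ∪ B)ᶜ, m i := by
  have hiff : ∀ ω : ∀ i, Fin (m i),
      ((∀ i ∈ A, ω' i = ω i) ∧ (∀ i ∈ B, ω'' i = ω i)) ↔
      (∀ i ∈ A ∪ B, (fun j => if j ∈ A then ω' j else ω'' j) i = ω i) := by
    intro ω
    constructor
    · rintro ⟨h1, h2⟩ i hi
      rcases Finset.mem_union.1 hi with hA | hB
      · simpa [if_pos hA] using h1 i hA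
      · have hA : i ∉ A := fun hA => (Finset.disjoint_left.1 hd hA) hB
        simpa [if_neg hA] using h2 i hB
    · intro h
      constructor
      · intro i hi
        have := h i (Finset.mem_union_left _ hi)
        simpa [if_pos hi] using this
      · intro i hi
        have hA : i ∉ A := fun hA => (Finset.disjoint_left.1 hd hA) hi
        have := h i (Finset.mem_union_right _ hi)
        simpa [if_neg hA] using this
  rw [Finset.filter_congr (fun ω _ => hiff ω)]
  exact cyl_card (A ∪ B) _

set_option maxHeartbeats 1000000 in
lemma sum_PP_mul {p : (∀ i, Fin (m i)) → ℝ} (hp1 : ∑ x, p x = 1)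
    {A B : Finset (Fin n)} (hd : Disjoint A B) :
    ∑ ω, PP p A ω * PP p B ω = ∏ i ∈ (A ∪ B)ᶜ, (m i : ℝ) := by
  unfold PP
  calc ∑ ω : ∀ i, Fin (m i), (∑ ω', if ∀ i ∈ A, ω' i = ω i then p ω' else 0) *
        (∑ ω'', if ∀ i ∈ B, ω'' i = ω i then p ω'' else 0)
      = ∑ ω : ∀ i, Fin (m i), ∑ ω' : ∀ i, Fin (m i), ∑ ω'' : ∀ i, Fin (m i),
          (if (∀ i ∈ A, ω' i = ω i) ∧ (∀ i ∈ B, ω'' i = ω i) then p ω' * p ω'' else 0) := by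
        refine Finset.sum_congr rfl fun ω _ => ?_
        rw [Finset.sum_mul_sum]
        refine Finset.sum_congr rfl fun ω' _ => Finset.sum_congr rfl fun ω'' _ => ?_
        by_cases h1 : ∀ i ∈ A, ω' i = ω i <;> by_cases h2 : ∀ i ∈ B, ω'' i = ω i
        · rw [if_pos h1, if_pos h2, if_pos ⟨h1, h2⟩]
        · rw [if_pos h1, if_neg h2, if_neg (fun hc => h2 hc.2), mul_zero]
        · rw [if_neg h1, zero_mul, if_neg (fun hc => h1 hc.1)]
        · rw [if_neg h1, zero_mul, if_neg (fun hc => h1 hc.1)]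
    _ = ∑ ω' : ∀ i, Fin (m i), ∑ ω'' : ∀ i, Fin (m i), ∑ ω : ∀ i, Fin (m i),
          (if (∀ i ∈ A, ω' i = ω i) ∧ (∀ i ∈ B, ω'' i = ω i) then p ω' * p ω'' else 0) := by
        rw [Finset.sum_comm]
        exact Finset.sum_congr rfl fun ω' _ => Finset.sum_comm
    _ = ∑ ω' : ∀ i, Fin (m i), ∑ ω'' : ∀ i, Fin (m i),
          (∏ i ∈ (A ∪ B)ᶜ, (m i : ℝ)) * (p ω' * p ω'') := by
        refine Finset.sum_congr rfl fun ω' _ => Finset.sum_congr rfl fun ω'' _ => ?_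
        rw [sum_ite_const, pair_card hd]
        push_cast
        ring
    _ = ∏ i ∈ (A ∪ B)ᶜ, (m i : ℝ) := by
        simp only [← Finset.mul_sum]
        rw [hp1]
        simp only [mul_one]
        rw [hp1, mul_one]


lemma gibbs_le {x y : ℝ} (hx : 0 ≤ x) (hy : 0 ≤ y) (h : x ≠ 0 → y ≠ 0) :
    x * (Real.log y - Real.log x) ≤ y - x := by
  rcases eq_or_lt_of_le hx with h0|h0
  · rw [← h0]; simpa using hy
  · have hy0 : 0 < y := lt_of_le_of_ne hy (Ne.symm (h (ne_of_gt h0)))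
    have hlog := Real.log_le_sub_one_of_pos (div_pos hy0 h0)
    rw [Real.log_div (ne_of_gt hy0) (ne_of_gt h0)] at hlog
    have hx' : x * (y / x - 1) = y - x := by field_simp
    nlinarith [mul_le_mul_of_nonneg_left hlog (le_of_lt h0)]

lemma gibbs_eq {x y : ℝ} (hx : 0 < x) (hy : 0 < y)
    (h : x * (Real.log y - Real.log x) = y - x) : y = x := by
  by_contra hne
  have h1 : y / x ≠ 1 := by
    intro hc
    exact hne ((div_eq_one_iff_eq (ne_of_gt hx)).1 hc)
  have h2 := Real.log_lt_sub_one_of_pos (div_pos hy hx) h1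
  rw [Real.log_div (ne_of_gt hy) (ne_of_gt hx)] at h2
  have hx' : x * (y / x - 1) = y - x := by field_simp
  nlinarith [mul_lt_mul_of_pos_left h2 hx]


lemma det_lemma {p : (∀ i, Fin (m i)) → ℝ} (hp0 : ∀ x, 0 ≤ p x)
    {A B : Finset (Fin n)} (hAB : A ⊆ B)
    (hL : ∑ ω, p ω * Real.logb 2 (PP p B ω) = ∑ ω, p ω * Real.logb 2 (PP p A ω)) :
    ∀ ω, 0 < p ω → PP p B ω = PP p A ω := by
  have hterm : ∀ ω ∈ (Finset.univ : Finset (∀ i, Fin (m i))),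
      p ω * Real.logb 2 (PP p B ω) ≤ p ω * Real.logb 2 (PP p A ω) := by
    intro ω _
    rcases eq_or_lt_of_le (hp0 ω) with h|h
    · rw [← h, zero_mul, zero_mul]
    · refine mul_le_mul_of_nonneg_left ?_ (hp0 ω)
      have hB : 0 < PP p B ω := lt_of_lt_of_le h (le_PP hp0 B ω)
      have hA : 0 < PP p A ω := lt_of_lt_of_le h (le_PP hp0 A ω)
      exact (Real.logb_le_logb (by norm_num) hB hA).2 (PP_mono hp0 hAB ω)
  have heq := (Finset.sum_eq_sum_iff_of_le hterm).1 hL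
  intro ω hω
  have h1 := heq ω (Finset.mem_univ ω)
  have h2 : Real.logb 2 (PP p B ω) = Real.logb 2 (PP p A ω) :=
    mul_left_cancel₀ (ne_of_gt hω) h1
  have hB : 0 < PP p B ω := lt_of_lt_of_le hω (le_PP hp0 B ω)
  have hA : 0 < PP p A ω := lt_of_lt_of_le hω (le_PP hp0 A ω)
  calc PP p B ω = 2 ^ Real.logb 2 (PP p B ω) :=
        (Real.rpow_logb (by norm_num) (by norm_num) hB).symm
    _ = 2 ^ Real.logb 2 (PP p A ω) := by rw [h2]
    _ = PP p A ω := Real.rpow_logb (by norm_num) (by norm_num) hA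

lemma ind_lemma {p : (∀ i, Fin (m i)) → ℝ} (hp0 : ∀ x, 0 ≤ p x) (hp1 : ∑ x, p x = 1)
    {A B : Finset (Fin n)} (hd : Disjoint A B)
    (hL : ∑ ω, p ω * Real.logb 2 (PP p (A ∪ B) ω)
        = ∑ ω, p ω * Real.logb 2 (PP p A ω) + ∑ ω, p ω * Real.logb 2 (PP p B ω)) :
    ∀ ω, 0 < p ω → PP p (A ∪ B) ω = PP p A ω * PP p B ω := by
  set g : (∀ i, Fin (m i)) → ℝ :=
    fun ω => Real.log (PP p A ω * PP p B ω) - Real.log (PP p (A ∪ B) ω) with hgdef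
  have h2pos : (0:ℝ) < Real.log 2 := Real.log_pos (by norm_num)
  have key : ∀ ω, p ω * g ω = p ω * ((Real.logb 2 (PP p A ω) + Real.logb 2 (PP p B ω)
      - Real.logb 2 (PP p (A ∪ B) ω)) * Real.log 2) := by
    intro ω
    rcases eq_or_lt_of_le (hp0 ω) with h|h
    · rw [← h, zero_mul, zero_mul]
    · have hA : PP p A ω ≠ 0 := ne_of_gt (lt_of_lt_of_le h (le_PP hp0 A ω))
      have hB : PP p B ω ≠ 0 := ne_of_gt (lt_of_lt_of_le h (le_PP hp0 B ω))
      congr 1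
      rw [hgdef]
      simp only [Real.logb]
      rw [Real.log_mul hA hB]
      field_simp
  have hgsum : ∑ ω, p ω * g ω = 0 := by
    have e1 : ∑ ω, p ω * g ω = (∑ ω, p ω * (Real.logb 2 (PP p A ω) + Real.logb 2 (PP p B ω)
        - Real.logb 2 (PP p (A ∪ B) ω))) * Real.log 2 := by
      rw [Finset.sum_mul]
      exact Finset.sum_congr rfl fun ω _ => by rw [key ω]; ring
    rw [e1]
    have e2 : ∑ ω, p ω * (Real.logb 2 (PP p A ω) + Real.logb 2 (PP p B ω)
        - Real.logb 2 (PP p (A ∪ B) ω)) = 0 := by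
      simp only [mul_add, mul_sub]
      rw [Finset.sum_sub_distrib, Finset.sum_add_distrib]
      linarith [hL]
    rw [e2, zero_mul]
  have hginv : ∀ ω ω', (∀ i ∈ A ∪ B, ω i = ω' i) → g ω = g ω' := by
    intro ω ω' h
    rw [hgdef]
    dsimp only
    rw [PP_congr p Finset.subset_union_left h, PP_congr p Finset.subset_union_right h,
      PP_congr p (le_refl (A ∪ B)) h]
  have hswap : ∑ ω, PP p (A ∪ B) ω * g ω = 0 := by
    rw [swap_sum p (A ∪ B) g hginv, hgsum, mul_zero]
  have hle : ∀ ω ∈ (Finset.univ : Finset (∀ i, Fin (m i))),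
      PP p (A ∪ B) ω * g ω ≤ PP p A ω * PP p B ω - PP p (A ∪ B) ω := by
    intro ω _
    refine gibbs_le (PP_nonneg hp0 _ ω)
      (mul_nonneg (PP_nonneg hp0 _ ω) (PP_nonneg hp0 _ ω)) ?_
    intro hne
    have hpos : 0 < PP p (A ∪ B) ω := lt_of_le_of_ne (PP_nonneg hp0 _ ω) (Ne.symm hne)
    have h1 : 0 < PP p A ω := lt_of_lt_of_le hpos (PP_mono hp0 Finset.subset_union_left ω)
    have h2 : 0 < PP p B ω := lt_of_lt_of_le hpos (PP_mono hp0 Finset.subset_union_right ω)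
    exact ne_of_gt (mul_pos h1 h2)
  have hsum_eq : ∑ ω, (PP p A ω * PP p B ω - PP p (A ∪ B) ω) = 0 := by
    rw [Finset.sum_sub_distrib, sum_PP_mul hp1 hd, sum_PP hp1 (A ∪ B), sub_self]
  have heq := (Finset.sum_eq_sum_iff_of_le hle).1 (by rw [hswap, hsum_eq])
  intro ω hω
  have h1 := heq ω (Finset.mem_univ ω)
  have hpos : 0 < PP p (A ∪ B) ω := lt_of_lt_of_le hω (le_PP hp0 _ ω)
  have hA : 0 < PP p A ω := lt_of_lt_of_le hpos (PP_mono hp0 Finset.subset_union_left ω)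
  have hB : 0 < PP p B ω := lt_of_lt_of_le hpos (PP_mono hp0 Finset.subset_union_right ω)
  exact (gibbs_eq hpos (mul_pos hA hB) h1).symm

end generic2

section four
variable {m : Fin 4 → ℕ}
noncomputable def mg0 (p : (∀ i, Fin (m i)) → ℝ) (s : Fin (m 0)) : ℝ :=
  ∑ ω, if ω 0 = s then p ω else 0
noncomputable def mg2 (p : (∀ i, Fin (m i)) → ℝ) (z : Fin (m 2)) : ℝ :=
  ∑ ω, if ω 2 = z then p ω else 0
noncomputable def mg3 (p : (∀ i, Fin (m i)) → ℝ) (w : Fin (m 3)) : ℝ :=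
  ∑ ω, if ω 3 = w then p ω else 0
noncomputable def mg023 (p : (∀ i, Fin (m i)) → ℝ) (s : Fin (m 0)) (z : Fin (m 2))
    (w : Fin (m 3)) : ℝ :=
  ∑ ω, if ω 0 = s ∧ ω 2 = z ∧ ω 3 = w then p ω else 0

lemma PP_zero (p : (∀ i, Fin (m i)) → ℝ) (ω : ∀ i, Fin (m i)) :
    PP p {0} ω = mg0 p (ω 0) := by
  unfold PP mg0
  exact Finset.sum_congr rfl fun ω' _ => by
    congr 1
    simp
lemma PP_two (p : (∀ i, Fin (m i)) → ℝ) (ω : ∀ i, Fin (m i)) :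
    PP p {2} ω = mg2 p (ω 2) := by
  unfold PP mg2
  exact Finset.sum_congr rfl fun ω' _ => by congr 1; simp
lemma PP_three (p : (∀ i, Fin (m i)) → ℝ) (ω : ∀ i, Fin (m i)) :
    PP p {3} ω = mg3 p (ω 3) := by
  unfold PP mg3
  exact Finset.sum_congr rfl fun ω' _ => by congr 1; simp
lemma PP_023 (p : (∀ i, Fin (m i)) → ℝ) (ω : ∀ i, Fin (m i)) :
    PP p ({0,2,3} : Finset (Fin 4)) ω = mg023 p (ω 0) (ω 2) (ω 3) := by
  unfold PP mg023
  exact Finset.sum_congr rfl fun ω' _ => by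
    congr 1
    simp [Finset.mem_insert, forall_eq_or_imp]

lemma mg2_nonneg {p : (∀ i, Fin (m i)) → ℝ} (hp0 : ∀ x, 0 ≤ p x) (z : Fin (m 2)) :
    0 ≤ mg2 p z :=
  Finset.sum_nonneg fun ω _ => by split_ifs; exacts [hp0 ω, le_refl 0]
lemma mg3_nonneg {p : (∀ i, Fin (m i)) → ℝ} (hp0 : ∀ x, 0 ≤ p x) (w : Fin (m 3)) :
    0 ≤ mg3 p w :=
  Finset.sum_nonneg fun ω _ => by split_ifs; exacts [hp0 ω, le_refl 0]
lemma mg0_nonneg {p : (∀ i, Fin (m i)) → ℝ} (hp0 : ∀ x, 0 ≤ p x) (s : Fin (m 0)) :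
    0 ≤ mg0 p s :=
  Finset.sum_nonneg fun ω _ => by split_ifs; exacts [hp0 ω, le_refl 0]

lemma le_mg2 {p : (∀ i, Fin (m i)) → ℝ} (hp0 : ∀ x, 0 ≤ p x) (ω : ∀ i, Fin (m i)) :
    p ω ≤ mg2 p (ω 2) := by
  have h := Finset.single_le_sum (f := fun ω' => if ω' 2 = ω 2 then p ω' else 0)
    (fun ω' _ => by split_ifs; exacts [hp0 ω', le_refl 0]) (Finset.mem_univ ω)
  simpa [mg2] using h
lemma le_mg3 {p : (∀ i, Fin (m i)) → ℝ} (hp0 : ∀ x, 0 ≤ p x) (ω : ∀ i, Fin (m i)) :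
    p ω ≤ mg3 p (ω 3) := by
  have h := Finset.single_le_sum (f := fun ω' => if ω' 3 = ω 3 then p ω' else 0)
    (fun ω' _ => by split_ifs; exacts [hp0 ω', le_refl 0]) (Finset.mem_univ ω)
  simpa [mg3] using h
lemma le_mg0 {p : (∀ i, Fin (m i)) → ℝ} (hp0 : ∀ x, 0 ≤ p x) (ω : ∀ i, Fin (m i)) :
    p ω ≤ mg0 p (ω 0) := by
  have h := Finset.single_le_sum (f := fun ω' => if ω' 0 = ω 0 then p ω' else 0)
    (fun ω' _ => by split_ifs; exacts [hp0 ω', le_refl 0]) (Finset.mem_univ ω)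
  simpa [mg0] using h

lemma sum_mg2 {p : (∀ i, Fin (m i)) → ℝ} (hp1 : ∑ x, p x = 1) : ∑ z, mg2 p z = 1 := by
  unfold mg2
  rw [Finset.sum_comm]
  rw [← hp1]
  exact Finset.sum_congr rfl fun ω _ => by simp
lemma sum_mg3 {p : (∀ i, Fin (m i)) → ℝ} (hp1 : ∑ x, p x = 1) : ∑ w, mg3 p w = 1 := by
  unfold mg3
  rw [Finset.sum_comm]
  rw [← hp1]
  exact Finset.sum_congr rfl fun ω _ => by simp

lemma sum_mg023 (p : (∀ i, Fin (m i)) → ℝ) (s : Fin (m 0)) :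
    ∑ zw : Fin (m 2) × Fin (m 3), mg023 p s zw.1 zw.2 = mg0 p s := by
  unfold mg023 mg0
  rw [Finset.sum_comm]
  refine Finset.sum_congr rfl fun ω _ => ?_
  rw [Fintype.sum_prod_type]
  by_cases h : ω 0 = s
  · simp [h, ite_and]
  · simp [h]

/-- attainability -/
lemma att {p : (∀ i, Fin (m i)) → ℝ} (hp0 : ∀ x, 0 ≤ p x) (hp1 : ∑ x, p x = 1)
    (h023 : ∀ ω, 0 < p ω →
      PP p ({0,2,3} : Finset (Fin 4)) ω = PP p {0} ω * PP p {2} ω * PP p {3} ω)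
    (ω₀ ω₁ ω₂ : ∀ i, Fin (m i)) (h0 : 0 < p ω₀) (h1 : 0 < p ω₁) (h2 : 0 < p ω₂) :
    ∃ ω₃, 0 < p ω₃ ∧ ω₃ 0 = ω₀ 0 ∧ ω₃ 2 = ω₁ 2 ∧ ω₃ 3 = ω₂ 3 := by
  by_contra hno
  push_neg at hno
  have hzero : mg023 p (ω₀ 0) (ω₁ 2) (ω₂ 3) = 0 := by
    refine Finset.sum_eq_zero fun ω _ => ?_
    split_ifs with h
    · by_contra hne
      have hpos : 0 < p ω := lt_of_le_of_ne (hp0 ω) (Ne.symm hne)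
      exact (hno ω hpos h.1 h.2.1) h.2.2
    · rfl
  have hf0 : 0 < mg0 p (ω₀ 0) := lt_of_lt_of_le h0 (le_mg0 hp0 ω₀)
  have hf2 : 0 < mg2 p (ω₁ 2) := lt_of_lt_of_le h1 (le_mg2 hp0 ω₁)
  have hf3 : 0 < mg3 p (ω₂ 3) := lt_of_lt_of_le h2 (le_mg3 hp0 ω₂)
  have hbound : ∀ zw ∈ (Finset.univ : Finset (Fin (m 2) × Fin (m 3))),
      mg023 p (ω₀ 0) zw.1 zw.2 ≤ mg0 p (ω₀ 0) * (mg2 p zw.1 * mg3 p zw.2) := by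
    rintro ⟨z, w⟩ _
    dsimp only
    rcases eq_or_lt_of_le (Finset.sum_nonneg (f := fun ω =>
        if ω 0 = ω₀ 0 ∧ ω 2 = z ∧ ω 3 = w then p ω else 0)
        fun ω _ => by split_ifs; exacts [hp0 ω, le_refl 0]) with h|h
    · have hm : mg023 p (ω₀ 0) z w = 0 := h.symm
      rw [hm]
      exact mul_nonneg (mg0_nonneg hp0 _) (mul_nonneg (mg2_nonneg hp0 _) (mg3_nonneg hp0 _))
    · obtain ⟨ω, _, hne⟩ := Finset.exists_ne_zero_of_sum_ne_zero
        (s := (Finset.univ : Finset (∀ i, Fin (m i))))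
        (f := fun ω => if ω 0 = ω₀ 0 ∧ ω 2 = z ∧ ω 3 = w then p ω else 0) (by simpa using h.ne')
      by_cases hcond : ω 0 = ω₀ 0 ∧ ω 2 = z ∧ ω 3 = w
      · have hpω : 0 < p ω := by
          rcases eq_or_lt_of_le (hp0 ω) with he|hl
          · exfalso
            apply hne
            show (if ω 0 = ω₀ 0 ∧ ω 2 = z ∧ ω 3 = w then p ω else 0) = 0
            rw [if_pos hcond, ← he]

          · exact hl
        refine le_of_eq ?_
        have e1 : mg023 p (ω₀ 0) z w = mg023 p (ω 0) (ω 2) (ω 3) := by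
          rw [hcond.1, hcond.2.1, hcond.2.2]
        rw [e1, ← PP_023, h023 ω hpω, PP_zero, PP_two, PP_three,
          hcond.1, hcond.2.1, hcond.2.2]
        ring
      · exfalso
        apply hne
        show (if ω 0 = ω₀ 0 ∧ ω 2 = z ∧ ω 3 = w then p ω else 0) = 0
        rw [if_neg hcond]
  have hstrict : ∃ zw ∈ (Finset.univ : Finset (Fin (m 2) × Fin (m 3))),
      mg023 p (ω₀ 0) zw.1 zw.2 < mg0 p (ω₀ 0) * (mg2 p zw.1 * mg3 p zw.2) := by
    refine ⟨(ω₁ 2, ω₂ 3), Finset.mem_univ _, ?_⟩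
    dsimp only
    rw [hzero]
    exact mul_pos hf0 (mul_pos hf2 hf3)
  have hlt := Finset.sum_lt_sum hbound hstrict
  rw [sum_mg023] at hlt
  have hrhs : ∑ zw : Fin (m 2) × Fin (m 3), mg0 p (ω₀ 0) * (mg2 p zw.1 * mg3 p zw.2)
      = mg0 p (ω₀ 0) := by
    rw [← Finset.mul_sum]
    rw [Fintype.sum_prod_type]
    have : ∑ z : Fin (m 2), ∑ w : Fin (m 3), mg2 p z * mg3 p w = 1 := by
      rw [← Finset.sum_mul_sum, sum_mg2 hp1, sum_mg3 hp1, mul_one]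
    rw [this, mul_one]
  rw [hrhs] at hlt
  exact lt_irrefl _ hlt

end four

section counts
variable {H : Type} [Fintype H] [DecidableEq H] [AddCommGroup H]

lemma card_fst (x0 : H) :
    ((univ : Finset (H × H)).filter (fun z => z.1 = x0)).card = Fintype.card H := by
  rw [← Fintype.card_subtype]
  exact Fintype.card_congr
    { toFun := fun z => z.1.2
      invFun := fun y => ⟨(x0, y), rfl⟩
      left_inv := by rintro ⟨⟨a, c⟩, h⟩; simp at h; subst h; rfl
      right_inv := fun y => rfl }

lemma card_snd (y0 : H) :
    ((univ : Finset (H × H)).filter (fun z => z.2 = y0)).card = Fintype.card H := by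
  rw [← Fintype.card_subtype]
  exact Fintype.card_congr
    { toFun := fun z => z.1.1
      invFun := fun x => ⟨(x, y0), rfl⟩
      left_inv := by rintro ⟨⟨a, c⟩, h⟩; simp at h; subst h; rfl
      right_inv := fun y => rfl }

lemma card_sum (c : H) :
    ((univ : Finset (H × H)).filter (fun z => z.1 + z.2 = c)).card = Fintype.card H := by
  rw [← Fintype.card_subtype]
  exact Fintype.card_congr
    { toFun := fun z => z.1.2
      invFun := fun y => ⟨(c - y, y), by simp⟩
      left_inv := by
        rintro ⟨⟨a, d⟩, h⟩
        simp only at h ⊢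
        apply Subtype.ext
        simp only [Prod.mk.injEq]
        refine ⟨by simp [← h], trivial⟩
      right_inv := fun y => rfl }

lemma card_full :
    ((univ : Finset (H × H)).filter (fun _ => True)).card = Fintype.card H * Fintype.card H := by
  simp [Finset.filter_true_of_mem]

lemma card_sing_aux {P : H × H → Prop} [DecidablePred P] (z0 : H × H)
    (h : ∀ z, P z ↔ z = z0) :
    ((univ : Finset (H × H)).filter P).card = 1 := by
  rw [Finset.card_eq_one]
  refine ⟨z0, ?_⟩
  ext z
  simp [h z]

/-- the per-factor count -/
lemma count_factor (c0 c1 c2 : Prop) [Decidable c0] [Decidable c1] [Decidable c2]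
    (x0 y0 : H) :
    ((univ : Finset (H × H)).filter
      (fun z => (c0 → z.1 = x0) ∧ (c1 → z.2 = y0) ∧ (c2 → z.1 + z.2 = x0 + y0))).card
    = Fintype.card H ^
        (2 - min 2 ((if c0 then 1 else 0) + (if c1 then 1 else 0) + (if c2 then 1 else 0))) := by
  by_cases h0 : c0 <;> by_cases h1 : c1 <;> by_cases h2 : c2 <;>
    simp only [h0, h1, h2, if_true, if_false, true_implies, false_implies, true_and, and_true]
  · -- all three
    rw [show 2 - min 2 (1+1+1) = 0 by norm_num, pow_zero]
    refine card_sing_aux (x0, y0) fun z => ?_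
    constructor
    · rintro ⟨ha, hb, _⟩; exact Prod.ext ha hb
    · rintro rfl; exact ⟨rfl, rfl, rfl⟩
  · -- c0 c1
    rw [show 2 - min 2 (1+1+0) = 0 by norm_num, pow_zero]
    refine card_sing_aux (x0, y0) fun z => ?_
    constructor
    · rintro ⟨ha, hb⟩; exact Prod.ext ha hb
    · rintro rfl; exact ⟨rfl, rfl⟩
  · -- c0 c2
    rw [show 2 - min 2 (1+0+1) = 0 by norm_num, pow_zero]
    refine card_sing_aux (x0, y0) fun z => ?_
    constructor
    · rintro ⟨ha, hb⟩
      refine Prod.ext ha ?_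
      have := hb
      rw [ha] at this
      exact add_left_cancel this
    · rintro rfl; exact ⟨rfl, rfl⟩
  · -- c0 only
    rw [show 2 - min 2 (1+0+0) = 1 by norm_num, pow_one]
    exact card_fst x0
  · -- c1 c2
    rw [show 2 - min 2 (0+1+1) = 0 by norm_num, pow_zero]
    refine card_sing_aux (x0, y0) fun z => ?_
    constructor
    · rintro ⟨hb, ha⟩
      refine Prod.ext ?_ hb
      rw [hb] at ha
      exact add_right_cancel ha
    · rintro rfl; exact ⟨rfl, rfl⟩
  · -- c1 only
    rw [show 2 - min 2 (0+1+0) = 1 by norm_num, pow_one]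
    exact card_snd y0
  · -- c2 only
    rw [show 2 - min 2 (0+0+1) = 1 by norm_num, pow_one]
    exact card_sum (x0 + y0)
  · -- none
    rw [show 2 - min 2 (0+0+0) = 2 by norm_num, pow_two]
    exact card_full

/-- splitting a count over a product structure -/
lemma count_split {α β : Type} [Fintype α] [Fintype β] [DecidableEq α] [DecidableEq β]
    (Q1 : α × α → Prop) (Q2 : β × β → Prop) [DecidablePred Q1] [DecidablePred Q2] :
    ((univ : Finset ((α × β) × (α × β))).filter
       (fun t => Q1 (t.1.1, t.2.1) ∧ Q2 (t.1.2, t.2.2))).card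
    = ((univ : Finset (α × α)).filter Q1).card * ((univ : Finset (β × β)).filter Q2).card := by
  rw [← Fintype.card_subtype, ← Fintype.card_subtype, ← Fintype.card_subtype,
    ← Fintype.card_prod]
  exact Fintype.card_congr
    { toFun := fun t => (⟨(t.1.1.1, t.1.2.1), t.2.1⟩, ⟨(t.1.1.2, t.1.2.2), t.2.2⟩)
      invFun := fun u => ⟨((u.1.1.1, u.2.1.1), (u.1.1.2, u.2.1.2)), u.1.2, u.2.2⟩
      left_inv := by rintro ⟨⟨⟨a, c⟩, ⟨d, e⟩⟩, h⟩; rfl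
      right_inv := by rintro ⟨⟨⟨a, c⟩, h1⟩, ⟨⟨d, e⟩, h2⟩⟩; rfl }

lemma card_inter_012 (A : Finset (Fin 4)) :
    (A ∩ ({0,1,2} : Finset (Fin 4))).card
    = (if (0:Fin 4) ∈ A then 1 else 0) + (if (1:Fin 4) ∈ A then 1 else 0)
      + (if (2:Fin 4) ∈ A then 1 else 0) := by
  rw [Finset.inter_comm, ← Finset.filter_mem_eq_inter, Finset.card_filter]
  rw [show ({0,1,2} : Finset (Fin 4)) = insert 0 (insert 1 {2}) from rfl]
  rw [Finset.sum_insert (by decide), Finset.sum_insert (by decide), Finset.sum_singleton]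
  ring

lemma card_inter_013 (A : Finset (Fin 4)) :
    (A ∩ ({0,1,3} : Finset (Fin 4))).card
    = (if (0:Fin 4) ∈ A then 1 else 0) + (if (1:Fin 4) ∈ A then 1 else 0)
      + (if (3:Fin 4) ∈ A then 1 else 0) := by
  rw [Finset.inter_comm, ← Finset.filter_mem_eq_inter, Finset.card_filter]
  rw [show ({0,1,3} : Finset (Fin 4)) = insert 0 (insert 1 {3}) from rfl]
  rw [Finset.sum_insert (by decide), Finset.sum_insert (by decide), Finset.sum_singleton]
  ring


end counts

section pushforward
variable {n : ℕ} {m : Fin n → ℕ} {T : Type} [Fintype T] [DecidableEq T]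
noncomputable def pF (F : T → (∀ i, Fin (m i))) (ω : ∀ i, Fin (m i)) : ℝ :=
  ((Finset.univ.filter fun t => F t = ω).card : ℝ) / (Fintype.card T : ℝ)

lemma pF_nonneg (F : T → (∀ i, Fin (m i))) (ω : ∀ i, Fin (m i)) : 0 ≤ pF F ω := by
  unfold pF
  positivity

lemma card_filter_real {α : Type} [Fintype α] (c : α → Prop) [DecidablePred c] :
    ((Finset.univ.filter c).card : ℝ) = ∑ x, (if c x then (1:ℝ) else 0) := by
  rw [Finset.card_filter]
  push_cast
  exact Finset.sum_congr rfl fun x _ => by split_ifs <;> norm_num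

lemma sum_pF (F : T → (∀ i, Fin (m i))) (hT : 0 < Fintype.card T) :
    ∑ ω, pF F ω = 1 := by
  unfold pF
  rw [← Finset.sum_div]
  have e : ∑ ω, ((Finset.univ.filter fun t => F t = ω).card : ℝ) = Fintype.card T := by
    calc ∑ ω, ((Finset.univ.filter fun t => F t = ω).card : ℝ)
        = ∑ ω, ∑ t, (if F t = ω then (1:ℝ) else 0) :=
          Finset.sum_congr rfl fun ω _ => card_filter_real _
      _ = ∑ t, ∑ ω, (if F t = ω then (1:ℝ) else 0) := Finset.sum_comm
      _ = ∑ t : T, (1:ℝ) := by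
          refine Finset.sum_congr rfl fun t _ => ?_
          rw [Finset.sum_ite_eq Finset.univ (F t) (fun _ => (1:ℝ)),
            if_pos (Finset.mem_univ _)]
      _ = Fintype.card T := by rw [Finset.sum_const, Finset.card_univ, nsmul_eq_mul, mul_one]
  rw [e, div_self (by exact_mod_cast ne_of_gt hT)]

lemma PP_pF (F : T → (∀ i, Fin (m i))) (A : Finset (Fin n)) (C : ℕ)
    (hC : ∀ t : T, (Finset.univ.filter fun t' => ∀ i ∈ A, F t' i = F t i).card = C)
    (t : T) : PP (pF F) A (F t) = (C : ℝ) / (Fintype.card T : ℝ) := by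
  unfold PP pF
  have e0 : ∀ ω' : ∀ i, Fin (m i),
      (if ∀ i ∈ A, ω' i = F t i
        then ((Finset.univ.filter fun t' => F t' = ω').card : ℝ) / (Fintype.card T : ℝ) else 0)
      = (if ∀ i ∈ A, ω' i = F t i
          then ((Finset.univ.filter fun t' => F t' = ω').card : ℝ) else 0) / Fintype.card T := by
    intro ω'
    split_ifs
    · rfl
    · rw [zero_div]
  rw [Finset.sum_congr rfl fun ω' _ => e0 ω', ← Finset.sum_div]
  congr 1
  calc ∑ ω' : ∀ i, Fin (m i), (if ∀ i ∈ A, ω' i = F t i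
          then ((Finset.univ.filter fun t' => F t' = ω').card : ℝ) else 0)
      = ∑ ω' : ∀ i, Fin (m i), ∑ t' : T,
          (if F t' = ω' then (if ∀ i ∈ A, ω' i = F t i then (1:ℝ) else 0) else 0) := by
        refine Finset.sum_congr rfl fun ω' _ => ?_
        by_cases h : ∀ i ∈ A, ω' i = F t i
        · rw [if_pos h, card_filter_real]
          exact Finset.sum_congr rfl fun t' _ => by rw [if_pos h]
        · rw [if_neg h]
          symm
          refine Finset.sum_eq_zero fun t' _ => ?_
          rw [if_neg h, ite_self]
      _ = ∑ t' : T, ∑ ω' : ∀ i, Fin (m i),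
          (if F t' = ω' then (if ∀ i ∈ A, ω' i = F t i then (1:ℝ) else 0) else 0) :=
        Finset.sum_comm
      _ = ∑ t' : T, (if ∀ i ∈ A, F t' i = F t i then (1:ℝ) else 0) := by
        refine Finset.sum_congr rfl fun t' _ => ?_
        rw [Finset.sum_ite_eq Finset.univ (F t')
          (fun ω' => (if ∀ i ∈ A, ω' i = F t i then (1:ℝ) else 0)),
          if_pos (Finset.mem_univ _)]
      _ = (C : ℝ) := by rw [← card_filter_real, hC t]

lemma sum_pF_logb (F : T → (∀ i, Fin (m i))) (A : Finset (Fin n)) (C : ℕ)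
    (hC : ∀ t : T, (Finset.univ.filter fun t' => ∀ i ∈ A, F t' i = F t i).card = C)
    (hT : 0 < Fintype.card T) :
    ∑ ω, pF F ω * Real.logb 2 (PP (pF F) A ω)
      = Real.logb 2 ((C : ℝ) / (Fintype.card T : ℝ)) := by
  set g : (∀ i, Fin (m i)) → ℝ := fun ω => Real.logb 2 (PP (pF F) A ω) with hg
  have hTne : ((Fintype.card T : ℝ)) ≠ 0 := by exact_mod_cast ne_of_gt hT
  calc ∑ ω, pF F ω * g ω
      = ∑ ω : ∀ i, Fin (m i), (∑ t : T, (if F t = ω then g ω else 0)) / Fintype.card T := by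
        refine Finset.sum_congr rfl fun ω _ => ?_
        rw [pF, div_mul_eq_mul_div, card_filter_real, Finset.sum_mul]
        congr 1
        exact Finset.sum_congr rfl fun t _ => by split_ifs <;> simp
    _ = (∑ ω : ∀ i, Fin (m i), ∑ t : T, (if F t = ω then g ω else 0)) / Fintype.card T := by
        rw [Finset.sum_div]
    _ = (∑ t : T, ∑ ω : ∀ i, Fin (m i), (if F t = ω then g ω else 0)) / Fintype.card T := by
        rw [Finset.sum_comm]
    _ = (∑ t : T, g (F t)) / Fintype.card T := by
        congr 1
        refine Finset.sum_congr rfl fun t _ => ?_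
        rw [Finset.sum_ite_eq Finset.univ (F t) (fun ω => g ω), if_pos (Finset.mem_univ _)]
    _ = Real.logb 2 ((C : ℝ) / (Fintype.card T : ℝ)) := by
        have : ∀ t : T, g (F t) = Real.logb 2 ((C : ℝ) / (Fintype.card T : ℝ)) := by
          intro t
          rw [hg]
          dsimp only
          rw [PP_pF F A C hC t]
        rw [Finset.sum_congr rfl fun t _ => this t, Finset.sum_const, Finset.card_univ,
          nsmul_eq_mul]
        field_simp

end pushforward

lemma forall4 (A : Finset (Fin 4)) (Q : Fin 4 → Prop) :
    (∀ i ∈ A, Q i) ↔ (((0:Fin 4) ∈ A → Q 0) ∧ ((1:Fin 4) ∈ A → Q 1)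
      ∧ ((2:Fin 4) ∈ A → Q 2) ∧ ((3:Fin 4) ∈ A → Q 3)) := by
  constructor
  · intro h
    exact ⟨fun h0 => h 0 h0, fun h1 => h 1 h1, fun h2 => h 2 h2, fun h3 => h 3 h3⟩
  · rintro ⟨q0, q1, q2, q3⟩ i hi
    fin_cases i
    exacts [q0 hi, q1 hi, q2 hi, q3 hi]

def mv (K₁ K₂ : ℕ) : Fin 4 → ℕ := ![(K₁+1)*(K₂+1), (K₁+1)*(K₂+1), K₁+1, K₂+1]
abbrev Tt (K₁ K₂ : ℕ) := (Fin (K₁+1) × Fin (K₂+1)) × (Fin (K₁+1) × Fin (K₂+1))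
def Ff (K₁ K₂ : ℕ) (t : Tt K₁ K₂) : ∀ i, Fin (mv K₁ K₂ i) :=
  Fin.cons (finProdFinEquiv t.1) (Fin.cons (finProdFinEquiv t.2)
    (Fin.cons (t.1.1 + t.2.1) (Fin.cons (t.1.2 + t.2.2) (fun i => i.elim0))))


lemma count_both {α β : Type} [Fintype α] [Fintype β] [DecidableEq α] [DecidableEq β]
    [AddCommGroup α] [AddCommGroup β]
    (c0 c1 c2 c3 : Prop) [Decidable c0] [Decidable c1] [Decidable c2] [Decidable c3]
    (t : (α × β) × (α × β)) :
    ((univ : Finset ((α × β) × (α × β))).filter (fun t' =>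
        (c0 → t'.1.1 = t.1.1 ∧ t'.1.2 = t.1.2) ∧ (c1 → t'.2.1 = t.2.1 ∧ t'.2.2 = t.2.2)
        ∧ (c2 → t'.1.1 + t'.2.1 = t.1.1 + t.2.1)
        ∧ (c3 → t'.1.2 + t'.2.2 = t.1.2 + t.2.2))).card
    = Fintype.card α ^
        (2 - min 2 ((if c0 then 1 else 0) + (if c1 then 1 else 0) + (if c2 then 1 else 0)))
      * Fintype.card β ^
        (2 - min 2 ((if c0 then 1 else 0) + (if c1 then 1 else 0) + (if c3 then 1 else 0))) := by
  rw [← Fintype.card_subtype]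
  have e : {t' : (α × β) × (α × β) //
      (c0 → t'.1.1 = t.1.1 ∧ t'.1.2 = t.1.2) ∧ (c1 → t'.2.1 = t.2.1 ∧ t'.2.2 = t.2.2)
        ∧ (c2 → t'.1.1 + t'.2.1 = t.1.1 + t.2.1)
        ∧ (c3 → t'.1.2 + t'.2.2 = t.1.2 + t.2.2)} ≃
      {z : α × α // (c0 → z.1 = t.1.1) ∧ (c1 → z.2 = t.2.1)
          ∧ (c2 → z.1 + z.2 = t.1.1 + t.2.1)} ×
      {z : β × β // (c0 → z.1 = t.1.2) ∧ (c1 → z.2 = t.2.2)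
          ∧ (c3 → z.1 + z.2 = t.1.2 + t.2.2)} :=
    { toFun := fun x =>
        (⟨(x.1.1.1, x.1.2.1), ⟨fun hc => (x.2.1 hc).1, fun hc => (x.2.2.1 hc).1, x.2.2.2.1⟩⟩,
         ⟨(x.1.1.2, x.1.2.2), ⟨fun hc => (x.2.1 hc).2, fun hc => (x.2.2.1 hc).2, x.2.2.2.2⟩⟩)
      invFun := fun u =>
        ⟨((u.1.1.1, u.2.1.1), (u.1.1.2, u.2.1.2)),
          ⟨fun hc => ⟨u.1.2.1 hc, u.2.2.1 hc⟩, fun hc => ⟨u.1.2.2.1 hc, u.2.2.2.1 hc⟩,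
            u.1.2.2.2, u.2.2.2.2⟩⟩
      left_inv := by rintro ⟨⟨⟨x1, x2⟩, ⟨x3, x4⟩⟩, h⟩; rfl
      right_inv := by rintro ⟨⟨⟨x1, x2⟩, h1⟩, ⟨⟨x3, x4⟩, h2⟩⟩; rfl }
  rw [Fintype.card_congr e, Fintype.card_prod, Fintype.card_subtype, Fintype.card_subtype,
    count_factor c0 c1 c2 t.1.1 t.2.1, count_factor c0 c1 c3 t.1.2 t.2.2]

set_option maxHeartbeats 2000000 in
lemma count_A (K₁ K₂ : ℕ) (A : Finset (Fin 4)) (t : Tt K₁ K₂) :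
    (univ.filter fun t' => ∀ i ∈ A, Ff K₁ K₂ t' i = Ff K₁ K₂ t i).card
    = (K₁+1) ^ (2 - min 2 ((A ∩ ({0,1,2} : Finset (Fin 4))).card))
      * (K₂+1) ^ (2 - min 2 ((A ∩ ({0,1,3} : Finset (Fin 4))).card)) := by
  have hiff : ∀ t' : Tt K₁ K₂,
      (∀ i ∈ A, Ff K₁ K₂ t' i = Ff K₁ K₂ t i) ↔
      (((0:Fin 4) ∈ A → t'.1.1 = t.1.1 ∧ t'.1.2 = t.1.2)
        ∧ ((1:Fin 4) ∈ A → t'.2.1 = t.2.1 ∧ t'.2.2 = t.2.2)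
        ∧ ((2:Fin 4) ∈ A → t'.1.1 + t'.2.1 = t.1.1 + t.2.1)
        ∧ ((3:Fin 4) ∈ A → t'.1.2 + t'.2.2 = t.1.2 + t.2.2)) := by
    intro t'
    rw [forall4]
    have e0 : (Ff K₁ K₂ t' 0 = Ff K₁ K₂ t 0) ↔ (t'.1.1 = t.1.1 ∧ t'.1.2 = t.1.2) := by
      show (finProdFinEquiv t'.1 = finProdFinEquiv t.1) ↔ _
      rw [Equiv.apply_eq_iff_eq, Prod.ext_iff]
    have e1 : (Ff K₁ K₂ t' 1 = Ff K₁ K₂ t 1) ↔ (t'.2.1 = t.2.1 ∧ t'.2.2 = t.2.2) := by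
      show (finProdFinEquiv t'.2 = finProdFinEquiv t.2) ↔ _
      rw [Equiv.apply_eq_iff_eq, Prod.ext_iff]
    have e2 : (Ff K₁ K₂ t' 2 = Ff K₁ K₂ t 2) ↔ (t'.1.1 + t'.2.1 = t.1.1 + t.2.1) := Iff.rfl
    have e3 : (Ff K₁ K₂ t' 3 = Ff K₁ K₂ t 3) ↔ (t'.1.2 + t'.2.2 = t.1.2 + t.2.2) := Iff.rfl
    rw [e0, e1, e2, e3]
  rw [Finset.filter_congr (fun t' _ => hiff t')]
  rw [count_both ((0:Fin 4) ∈ A) ((1:Fin 4) ∈ A) ((2:Fin 4) ∈ A) ((3:Fin 4) ∈ A) t,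
    Fintype.card_fin, Fintype.card_fin, card_inter_012, card_inter_013]


theorem backward_dir (a b : ℝ) (k₁ k₂ : ℕ) (hk₁ : 0 < k₁) (hk₂ : 0 < k₂)
    (ha : a = Real.logb 2 k₁) (hb : b = Real.logb 2 k₂) :
    IsEntropic 4
      (fun A => a * rkU 2 ({0,1,2} : Finset (Fin 4)) A +
                b * rkU 2 ({0,1,3} : Finset (Fin 4)) A) := by
  obtain ⟨K₁, rfl⟩ : ∃ K, k₁ = K + 1 := ⟨k₁ - 1, by omega⟩
  obtain ⟨K₂, rfl⟩ : ∃ K, k₂ = K + 1 := ⟨k₂ - 1, by omega⟩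
  have hT : 0 < Fintype.card (Tt K₁ K₂) := Fintype.card_pos
  refine ⟨mv K₁ K₂, pF (Ff K₁ K₂), fun ω => pF_nonneg _ ω, sum_pF _ hT, ?_⟩
  intro A
  show a * rkU 2 ({0,1,2} : Finset (Fin 4)) A + b * rkU 2 ({0,1,3} : Finset (Fin 4)) A = _
  rw [ent_restrict, sum_pF_logb (Ff K₁ K₂) A _ (count_A K₁ K₂ A) hT]
  set n1 := min 2 ((A ∩ ({0,1,2} : Finset (Fin 4))).card) with hn1
  set n2 := min 2 ((A ∩ ({0,1,3} : Finset (Fin 4))).card) with hn2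
  have hn1le : n1 ≤ 2 := min_le_left _ _
  have hn2le : n2 ≤ 2 := min_le_left _ _
  have hrk1 : rkU 2 ({0,1,2} : Finset (Fin 4)) A = (n1 : ℝ) := by
    rw [rkU, hn1]
    push_cast
    rfl
  have hrk2 : rkU 2 ({0,1,3} : Finset (Fin 4)) A = (n2 : ℝ) := by
    rw [rkU, hn2]
    push_cast
    rfl
  rw [hrk1, hrk2]
  have hx1 : (0:ℝ) < ((K₁+1 : ℕ) : ℝ) := by positivity
  have hx2 : (0:ℝ) < ((K₂+1 : ℕ) : ℝ) := by positivity
  have hcardT : ((Fintype.card (Tt K₁ K₂) : ℕ) : ℝ)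
      = ((K₁+1 : ℕ) : ℝ)^2 * ((K₂+1 : ℕ) : ℝ)^2 := by
    simp only [Tt, Fintype.card_prod, Fintype.card_fin]
    push_cast
    ring
  have hdiv : (((K₁+1) ^ (2 - n1) * (K₂+1) ^ (2 - n2) : ℕ) : ℝ)
      / ((Fintype.card (Tt K₁ K₂) : ℕ) : ℝ)
      = 1 / (((K₁+1 : ℕ) : ℝ)^n1 * ((K₂+1 : ℕ) : ℝ)^n2) := by
    rw [hcardT]
    have e1 : ((K₁+1 : ℕ) : ℝ)^2 = ((K₁+1 : ℕ) : ℝ)^(2-n1) * ((K₁+1 : ℕ) : ℝ)^n1 := by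
      rw [← pow_add]
      congr 1
      omega
    have e2 : ((K₂+1 : ℕ) : ℝ)^2 = ((K₂+1 : ℕ) : ℝ)^(2-n2) * ((K₂+1 : ℕ) : ℝ)^n2 := by
      rw [← pow_add]
      congr 1
      omega
    rw [e1, e2]
    push_cast
    have h1 : ((K₁:ℝ)+1) ≠ 0 := by positivity
    have h2 : ((K₂:ℝ)+1) ≠ 0 := by positivity
    field_simp
  rw [hdiv, one_div, Real.logb_inv, Real.logb_mul (by positivity) (by positivity),
    Real.logb_pow, Real.logb_pow]
  rw [ha, hb]
  push_cast
  ring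


theorem forward_dir (a b : ℝ)
    (hE : IsEntropic 4
      (fun A => a * rkU 2 ({0,1,2} : Finset (Fin 4)) A +
                b * rkU 2 ({0,1,3} : Finset (Fin 4)) A)) :
    ∃ k₁ k₂ : ℕ, 0 < k₁ ∧ 0 < k₂ ∧
      a = Real.logb 2 k₁ ∧ b = Real.logb 2 k₂ := by
  obtain ⟨m, p, hp0, hp1, hent⟩ := hE
  have hL : ∀ A : Finset (Fin 4),
      a * rkU 2 ({0,1,2} : Finset (Fin 4)) A + b * rkU 2 ({0,1,3} : Finset (Fin 4)) A
      = - ∑ ω, p ω * Real.logb 2 (PP p A ω) := by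
    intro A
    rw [← ent_restrict p A]
    exact hent A
  -- evaluate the nine needed sums
  have h0 : ∑ ω, p ω * Real.logb 2 (PP p {0} ω) = -(a + b) := by
    have h := hL {0}
    rw [rkU, rkU, show ((({0}:Finset (Fin 4)) ∩ {0,1,2}).card) = 1 from by decide,
      show ((({0}:Finset (Fin 4)) ∩ {0,1,3}).card) = 1 from by decide] at h
    norm_num at h
    linarith
  have h1 : ∑ ω, p ω * Real.logb 2 (PP p {1} ω) = -(a + b) := by
    have h := hL {1}
    rw [rkU, rkU, show ((({1}:Finset (Fin 4)) ∩ {0,1,2}).card) = 1 from by decide,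
      show ((({1}:Finset (Fin 4)) ∩ {0,1,3}).card) = 1 from by decide] at h
    norm_num at h
    linarith
  have h2 : ∑ ω, p ω * Real.logb 2 (PP p {2} ω) = -a := by
    have h := hL {2}
    rw [rkU, rkU, show ((({2}:Finset (Fin 4)) ∩ {0,1,2}).card) = 1 from by decide,
      show ((({2}:Finset (Fin 4)) ∩ {0,1,3}).card) = 0 from by decide] at h
    norm_num at h
    linarith
  have h3 : ∑ ω, p ω * Real.logb 2 (PP p {3} ω) = -b := by
    have h := hL {3}
    rw [rkU, rkU, show ((({3}:Finset (Fin 4)) ∩ {0,1,2}).card) = 0 from by decide,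
      show ((({3}:Finset (Fin 4)) ∩ {0,1,3}).card) = 1 from by decide] at h
    norm_num at h
    linarith
  have h01 : ∑ ω, p ω * Real.logb 2 (PP p {0,1} ω) = -(2*a + 2*b) := by
    have h := hL {0,1}
    rw [rkU, rkU, show ((({0,1}:Finset (Fin 4)) ∩ {0,1,2}).card) = 2 from by decide,
      show ((({0,1}:Finset (Fin 4)) ∩ {0,1,3}).card) = 2 from by decide] at h
    norm_num at h
    linarith
  have h23 : ∑ ω, p ω * Real.logb 2 (PP p {2,3} ω) = -(a + b) := by
    have h := hL {2,3}
    rw [rkU, rkU, show ((({2,3}:Finset (Fin 4)) ∩ {0,1,2}).card) = 1 from by decide,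
      show ((({2,3}:Finset (Fin 4)) ∩ {0,1,3}).card) = 1 from by decide] at h
    norm_num at h
    linarith
  have h123 : ∑ ω, p ω * Real.logb 2 (PP p {1,2,3} ω) = -(2*a + 2*b) := by
    have h := hL {1,2,3}
    rw [rkU, rkU, show ((({1,2,3}:Finset (Fin 4)) ∩ {0,1,2}).card) = 2 from by decide,
      show ((({1,2,3}:Finset (Fin 4)) ∩ {0,1,3}).card) = 2 from by decide] at h
    norm_num at h
    linarith
  have h023 : ∑ ω, p ω * Real.logb 2 (PP p {0,2,3} ω) = -(2*a + 2*b) := by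
    have h := hL {0,2,3}
    rw [rkU, rkU, show ((({0,2,3}:Finset (Fin 4)) ∩ {0,1,2}).card) = 2 from by decide,
      show ((({0,2,3}:Finset (Fin 4)) ∩ {0,1,3}).card) = 2 from by decide] at h
    norm_num at h
    linarith
  have huniv : ∑ ω, p ω * Real.logb 2 (PP p Finset.univ ω) = -(2*a + 2*b) := by
    have h := hL Finset.univ
    rw [rkU, rkU, show (((Finset.univ:Finset (Fin 4)) ∩ {0,1,2}).card) = 3 from by decide,
      show (((Finset.univ:Finset (Fin 4)) ∩ {0,1,3}).card) = 3 from by decide] at h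
    norm_num at h
    linarith
  -- independences / determinisms
  have I01 : ∀ ω, 0 < p ω → PP p {0,1} ω = PP p {0} ω * PP p {1} ω := by
    have hu : ({0} : Finset (Fin 4)) ∪ {1} = {0,1} := by decide
    have := ind_lemma hp0 hp1 (A := {0}) (B := {1}) (by decide)
      (by rw [hu, h01, h0, h1]; ring)
    rwa [hu] at this
  have I123 : ∀ ω, 0 < p ω → PP p {1,2,3} ω = PP p {1} ω * PP p {2,3} ω := by
    have hu : ({1} : Finset (Fin 4)) ∪ {2,3} = {1,2,3} := by decide
    have := ind_lemma hp0 hp1 (A := {1}) (B := {2,3}) (by decide)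
      (by rw [hu, h123, h1, h23]; ring)
    rwa [hu] at this
  have I23 : ∀ ω, 0 < p ω → PP p {2,3} ω = PP p {2} ω * PP p {3} ω := by
    have hu : ({2} : Finset (Fin 4)) ∪ {3} = {2,3} := by decide
    have := ind_lemma hp0 hp1 (A := {2}) (B := {3}) (by decide)
      (by rw [hu, h23, h2, h3]; ring)
    rwa [hu] at this
  have I023 : ∀ ω, 0 < p ω → PP p {0,2,3} ω = PP p {0} ω * PP p {2,3} ω := by
    have hu : ({0} : Finset (Fin 4)) ∪ {2,3} = {0,2,3} := by decide
    have := ind_lemma hp0 hp1 (A := {0}) (B := {2,3}) (by decide)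
      (by rw [hu, h023, h0, h23]; ring)
    rwa [hu] at this
  have D01 : ∀ ω, 0 < p ω → PP p Finset.univ ω = PP p {0,1} ω :=
    det_lemma hp0 (Finset.subset_univ _) (by rw [huniv, h01])
  have D123 : ∀ ω, 0 < p ω → PP p Finset.univ ω = PP p {1,2,3} ω :=
    det_lemma hp0 (Finset.subset_univ _) (by rw [huniv, h123])
  -- key identity : P_0 = P_2 * P_3 on support
  have key : ∀ ω, 0 < p ω → PP p {0} ω = PP p {2} ω * PP p {3} ω := by
    intro ω hω
    have hP1 : 0 < PP p {1} ω := lt_of_lt_of_le hω (le_PP hp0 _ ω)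
    have e1 : PP p {0} ω * PP p {1} ω = (PP p {2} ω * PP p {3} ω) * PP p {1} ω := by
      rw [← I01 ω hω, ← D01 ω hω, D123 ω hω, I123 ω hω, I23 ω hω]
      ring
    exact mul_right_cancel₀ (ne_of_gt hP1) e1
  have h023' : ∀ ω, 0 < p ω →
      PP p ({0,2,3} : Finset (Fin 4)) ω = PP p {0} ω * PP p {2} ω * PP p {3} ω := by
    intro ω hω
    rw [I023 ω hω, I23 ω hω]
    ring
  -- constancy of mg2 and mg3 on supports
  have const2 : ∀ ω ω', 0 < p ω → 0 < p ω' → PP p {2} ω = PP p {2} ω' := by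
    intro ω ω' hω hω'
    obtain ⟨ω₃, hp3, e0, e2, e3⟩ := att hp0 hp1 h023' ω ω' ω hω hω' hω
    have k1 := key ω hω
    have k2 := key ω₃ hp3
    have q0 : PP p {0} ω₃ = PP p {0} ω := by
      refine PP_congr p (le_refl ({0} : Finset (Fin 4))) ?_
      intro i hi
      simp only [Finset.mem_singleton] at hi
      rw [hi]; exact e0
    have q3 : PP p {3} ω₃ = PP p {3} ω := by
      refine PP_congr p (le_refl ({3} : Finset (Fin 4))) ?_
      intro i hi
      simp only [Finset.mem_singleton] at hi
      rw [hi]; exact e3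
    have q2 : PP p {2} ω₃ = PP p {2} ω' := by
      refine PP_congr p (le_refl ({2} : Finset (Fin 4))) ?_
      intro i hi
      simp only [Finset.mem_singleton] at hi
      rw [hi]; exact e2
    have hP3 : 0 < PP p {3} ω := lt_of_lt_of_le hω (le_PP hp0 _ ω)
    have : PP p {2} ω * PP p {3} ω = PP p {2} ω' * PP p {3} ω := by
      rw [← k1, ← q0, k2, q2, q3]
    exact mul_right_cancel₀ (ne_of_gt hP3) this
  have const3 : ∀ ω ω', 0 < p ω → 0 < p ω' → PP p {3} ω = PP p {3} ω' := by
    intro ω ω' hω hω'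
    obtain ⟨ω₃, hp3, e0, e2, e3⟩ := att hp0 hp1 h023' ω ω ω' hω hω hω'
    have k1 := key ω hω
    have k2 := key ω₃ hp3
    have q0 : PP p {0} ω₃ = PP p {0} ω := by
      refine PP_congr p (le_refl ({0} : Finset (Fin 4))) ?_
      intro i hi
      simp only [Finset.mem_singleton] at hi
      rw [hi]; exact e0
    have q2 : PP p {2} ω₃ = PP p {2} ω := by
      refine PP_congr p (le_refl ({2} : Finset (Fin 4))) ?_
      intro i hi
      simp only [Finset.mem_singleton] at hi
      rw [hi]; exact e2
    have q3 : PP p {3} ω₃ = PP p {3} ω' := by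
      refine PP_congr p (le_refl ({3} : Finset (Fin 4))) ?_
      intro i hi
      simp only [Finset.mem_singleton] at hi
      rw [hi]; exact e3
    have hP2 : 0 < PP p {2} ω := lt_of_lt_of_le hω (le_PP hp0 _ ω)
    have : PP p {2} ω * PP p {3} ω = PP p {2} ω * PP p {3} ω' := by
      rw [← k1, ← q0, k2, q2, q3]
    exact mul_left_cancel₀ (ne_of_gt hP2) this
  -- a support point
  obtain ⟨ωs, hωs⟩ : ∃ ω, 0 < p ω := by
    by_contra hc
    push_neg at hc
    have : ∑ x, p x = 0 := Finset.sum_eq_zero fun x _ => le_antisymm (hc x) (hp0 x)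
    rw [hp1] at this
    norm_num at this
  -- conclude for a
  have main : ∀ (c : ℝ), 0 < c →
      (∀ ω, 0 < p ω → PP p {2} ω = c) →
      ∃ k : ℕ, 0 < k ∧ (k : ℝ) * c = 1 ∧
        ∑ ω, p ω * Real.logb 2 (PP p {2} ω) = Real.logb 2 c := by
    intro c hc hconst
    have hzconst : ∀ z : Fin (m 2), mg2 p z ≠ 0 → mg2 p z = c := by
      intro z hz
      obtain ⟨ω', _, hne⟩ := Finset.exists_ne_zero_of_sum_ne_zero
        (s := (Finset.univ : Finset (∀ i, Fin (m i))))
        (f := fun ω => if ω 2 = z then p ω else 0) hz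
      by_cases hcd : ω' 2 = z
      · have hp' : 0 < p ω' := by
          rcases eq_or_lt_of_le (hp0 ω') with he|hl
          · exfalso; apply hne; rw [if_pos hcd, ← he]
          · exact hl
        rw [← hcd, ← PP_two]
        exact hconst ω' hp'
      · exfalso; apply hne; rw [if_neg hcd]
    set k := (Finset.univ.filter (fun z : Fin (m 2) => mg2 p z ≠ 0)).card with hk
    have hsum : (k : ℝ) * c = 1 := by
      have e1 : ∑ z ∈ Finset.univ.filter (fun z : Fin (m 2) => mg2 p z ≠ 0), mg2 p z
          = ∑ z, mg2 p z := Finset.sum_filter_ne_zero _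
      have e2 : ∑ z ∈ Finset.univ.filter (fun z : Fin (m 2) => mg2 p z ≠ 0), mg2 p z
          = (k : ℝ) * c := by
        rw [Finset.sum_congr rfl (fun z hz => hzconst z (Finset.mem_filter.1 hz).2),
          Finset.sum_const, hk, nsmul_eq_mul]
      rw [← e2, e1, sum_mg2 hp1]
    have hkpos : 0 < k := by
      rcases Nat.eq_zero_or_pos k with h|h
      · rw [h] at hsum; norm_num at hsum
      · exact h
    refine ⟨k, hkpos, hsum, ?_⟩
    have : ∑ ω, p ω * Real.logb 2 (PP p {2} ω) = ∑ ω, p ω * Real.logb 2 c := by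
      refine Finset.sum_congr rfl fun ω _ => ?_
      rcases eq_or_lt_of_le (hp0 ω) with he|hl
      · rw [← he, zero_mul, zero_mul]
      · rw [hconst ω hl]
    rw [this, ← Finset.sum_mul, hp1, one_mul]
  -- similarly for coordinate 3
  have main3 : ∀ (c : ℝ), 0 < c →
      (∀ ω, 0 < p ω → PP p {3} ω = c) →
      ∃ k : ℕ, 0 < k ∧ (k : ℝ) * c = 1 ∧
        ∑ ω, p ω * Real.logb 2 (PP p {3} ω) = Real.logb 2 c := by
    intro c hc hconst
    have hzconst : ∀ w : Fin (m 3), mg3 p w ≠ 0 → mg3 p w = c := by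
      intro w hw
      obtain ⟨ω', _, hne⟩ := Finset.exists_ne_zero_of_sum_ne_zero
        (s := (Finset.univ : Finset (∀ i, Fin (m i))))
        (f := fun ω => if ω 3 = w then p ω else 0) hw
      by_cases hcd : ω' 3 = w
      · have hp' : 0 < p ω' := by
          rcases eq_or_lt_of_le (hp0 ω') with he|hl
          · exfalso; apply hne; rw [if_pos hcd, ← he]
          · exact hl
        rw [← hcd, ← PP_three]
        exact hconst ω' hp'
      · exfalso; apply hne; rw [if_neg hcd]
    set k := (Finset.univ.filter (fun w : Fin (m 3) => mg3 p w ≠ 0)).card with hk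
    have hsum : (k : ℝ) * c = 1 := by
      have e1 : ∑ w ∈ Finset.univ.filter (fun w : Fin (m 3) => mg3 p w ≠ 0), mg3 p w
          = ∑ w, mg3 p w := Finset.sum_filter_ne_zero _
      have e2 : ∑ w ∈ Finset.univ.filter (fun w : Fin (m 3) => mg3 p w ≠ 0), mg3 p w
          = (k : ℝ) * c := by
        rw [Finset.sum_congr rfl (fun w hw => hzconst w (Finset.mem_filter.1 hw).2),
          Finset.sum_const, hk, nsmul_eq_mul]
      rw [← e2, e1, sum_mg3 hp1]
    have hkpos : 0 < k := by
      rcases Nat.eq_zero_or_pos k with h|h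
      · rw [h] at hsum; norm_num at hsum
      · exact h
    refine ⟨k, hkpos, hsum, ?_⟩
    have : ∑ ω, p ω * Real.logb 2 (PP p {3} ω) = ∑ ω, p ω * Real.logb 2 c := by
      refine Finset.sum_congr rfl fun ω _ => ?_
      rcases eq_or_lt_of_le (hp0 ω) with he|hl
      · rw [← he, zero_mul, zero_mul]
      · rw [hconst ω hl]
    rw [this, ← Finset.sum_mul, hp1, one_mul]
  -- put it together
  have hc2 : 0 < PP p {2} ωs := lt_of_lt_of_le hωs (le_PP hp0 _ ωs)
  have hc3 : 0 < PP p {3} ωs := lt_of_lt_of_le hωs (le_PP hp0 _ ωs)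
  obtain ⟨k₁, hk₁, hk₁c, hk₁sum⟩ := main (PP p {2} ωs) hc2 (fun ω hω => const2 ω ωs hω hωs)
  obtain ⟨k₂, hk₂, hk₂c, hk₂sum⟩ := main3 (PP p {3} ωs) hc3 (fun ω hω => const3 ω ωs hω hωs)
  refine ⟨k₁, k₂, hk₁, hk₂, ?_, ?_⟩
  · have hcval : PP p {2} ωs = 1 / (k₁ : ℝ) := by
      field_simp at hk₁c ⊢
      linarith
    rw [hk₁sum, hcval] at h2
    rw [one_div, Real.logb_inv] at h2
    linarith
  · have hcval : PP p {3} ωs = 1 / (k₂ : ℝ) := by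
      field_simp at hk₂c ⊢
      linarith
    rw [hk₂sum, hcval] at h3
    rw [one_div, Real.logb_inv] at h3
    linarith


end FaceAux

 /-- Theorem 5: for the face (U^{123}_{2,3}, U^{124}_{2,3}),
h = a·r₁ + b·r₂ (a, b ≥ 0) is entropic iff a = log₂ k₁ and b = log₂ k₂ for
positive integers k₁, k₂. -/
theorem face_U123_23_U124_23 (a b : ℝ) (ha : 0 ≤ a) (hb : 0 ≤ b) :
    IsEntropic 4
      (fun A => a * rkU 2 ({0,1,2} : Finset (Fin 4)) A +
                b * rkU 2 ({0,1,3} : Finset (Fin 4)) A)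
    ↔ ∃ k₁ k₂ : ℕ, 0 < k₁ ∧ 0 < k₂ ∧
        a = Real.logb 2 k₁ ∧ b = Real.logb 2 k₂ := by
  constructor
  · exact fun h => FaceAux.forward_dir a b h
  · rintro ⟨k₁, k₂, h1, h2, ha', hb'⟩
    exact FaceAux.backward_dir a b k₁ k₂ h1 h2 ha' hb'
end

section
/- Let X₁, X₂, X₃ be random variables on finite alphabets that are pairwise independent and such that each is a deterministic function of the other two. Then X₁, X₂, X₃ are each uniformly distributed on the support of their respective alphabets, and |supp(X₁)| = |supp(X₂)| = |supp(X₃)|. -/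
open Finset

/-- Marginal pmfs of a joint pmf on a triple product. -/
noncomputable def marg1 {A B C : Type} [Fintype B] [Fintype C]
    (p : A × B × C → ℝ) (x : A) : ℝ := ∑ y, ∑ z, p (x, y, z)

noncomputable def marg2 {A B C : Type} [Fintype A] [Fintype C]
    (p : A × B × C → ℝ) (y : B) : ℝ := ∑ x, ∑ z, p (x, y, z)

noncomputable def marg3 {A B C : Type} [Fintype A] [Fintype B]
    (p : A × B × C → ℝ) (z : C) : ℝ := ∑ x, ∑ y, p (x, y, z)

noncomputable def marg12 {A B C : Type} [Fintype C]
    (p : A × B × C → ℝ) (x : A) (y : B) : ℝ := ∑ z, p (x, y, z)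

noncomputable def marg13 {A B C : Type} [Fintype B]
    (p : A × B × C → ℝ) (x : A) (z : C) : ℝ := ∑ y, p (x, y, z)

noncomputable def marg23 {A B C : Type} [Fintype A]
    (p : A × B × C → ℝ) (y : B) (z : C) : ℝ := ∑ x, p (x, y, z)

/-- If X₁, X₂, X₃ are pairwise independent finite random variables, each a
deterministic function of the other two, then each is uniformly distributed on
its support and the three supports have the same size. -/
theorem pairwise_indep_functional_triple_uniform
    (m₁ m₂ m₃ : ℕ) (p : Fin m₁ × Fin m₂ × Fin m₃ → ℝ)
    (hp : ∀ x, 0 ≤ p x) (hsum : (∑ x, p x) = 1)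
    (hind12 : ∀ x y, marg12 p x y = marg1 p x * marg2 p y)
    (hind13 : ∀ x z, marg13 p x z = marg1 p x * marg3 p z)
    (hind23 : ∀ y z, marg23 p y z = marg2 p y * marg3 p z)
    (hfun : ∀ x y z, 0 < p (x, y, z) →
      p (x, y, z) = marg12 p x y ∧ p (x, y, z) = marg13 p x z ∧
      p (x, y, z) = marg23 p y z) :
    (∀ x x', 0 < marg1 p x → 0 < marg1 p x' → marg1 p x = marg1 p x') ∧
    (∀ y y', 0 < marg2 p y → 0 < marg2 p y' → marg2 p y = marg2 p y') ∧
    (∀ z z', 0 < marg3 p z → 0 < marg3 p z' → marg3 p z = marg3 p z') ∧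
    (Finset.univ.filter fun x => 0 < marg1 p x).card =
      (Finset.univ.filter fun y => 0 < marg2 p y).card ∧
    (Finset.univ.filter fun y => 0 < marg2 p y).card =
      (Finset.univ.filter fun z => 0 < marg3 p z).card := by
  classical
  have h1nn : ∀ x, 0 ≤ marg1 p x := fun x =>
    Finset.sum_nonneg fun y _ => Finset.sum_nonneg fun z _ => hp _
  have h2nn : ∀ y, 0 ≤ marg2 p y := fun y =>
    Finset.sum_nonneg fun x _ => Finset.sum_nonneg fun z _ => hp _
  have h3nn : ∀ z, 0 ≤ marg3 p z := fun z =>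
    Finset.sum_nonneg fun x _ => Finset.sum_nonneg fun y _ => hp _
  have exF : ∀ {n : ℕ} (f : Fin n → ℝ), (∀ i, 0 ≤ f i) → 0 < ∑ i, f i → ∃ i, 0 < f i := by
    intro n f hf hs
    by_contra h
    push_neg at h
    have : ∑ i, f i = 0 := Finset.sum_eq_zero fun i _ => le_antisymm (h i) (hf i)
    linarith
  have key : ∀ x y z, 0 < p (x, y, z) →
      marg1 p x = marg2 p y ∧ marg2 p y = marg3 p z ∧
      0 < marg1 p x ∧ 0 < marg2 p y ∧ 0 < marg3 p z := by
    intro x y z hpos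
    obtain ⟨h12, h13, h23⟩ := hfun x y z hpos
    rw [hind12] at h12
    rw [hind13] at h13
    rw [hind23] at h23
    have hm1 : 0 < marg1 p x := by
      rcases lt_or_eq_of_le (h1nn x) with h | h
      · exact h
      · exfalso; rw [← h, zero_mul] at h12; linarith
    have hm2 : 0 < marg2 p y := by
      rcases lt_or_eq_of_le (h2nn y) with h | h
      · exact h
      · exfalso; rw [← h, mul_zero] at h12; linarith
    have hm3 : 0 < marg3 p z := by
      rcases lt_or_eq_of_le (h3nn z) with h | h
      · exact h
      · exfalso; rw [← h, mul_zero] at h13; linarith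
    have q23 : marg2 p y = marg3 p z :=
      mul_left_cancel₀ hm1.ne' (h12.symm.trans h13)
    have q13 : marg1 p x = marg3 p z := by
      have e2 : marg1 p x * marg2 p y = marg2 p y * marg3 p z := h12.symm.trans h23
      rw [mul_comm (marg1 p x)] at e2
      exact mul_left_cancel₀ hm2.ne' e2
    exact ⟨q13.trans q23.symm, q23, hm1, hm2, hm3⟩
  have base : ∃ x y z, 0 < p (x, y, z) := by
    by_contra h
    push_neg at h
    have h0 : (∑ x, p x) = 0 := Finset.sum_eq_zero fun t _ => by
      obtain ⟨a, b, c⟩ := t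
      exact le_antisymm (h a b c) (hp _)
    rw [h0] at hsum
    linarith
  obtain ⟨x0, y0, z0, hbase⟩ := base
  obtain ⟨e120, e230, hm10, hm20, hm30⟩ := key x0 y0 z0 hbase
  have A1 : ∀ x, 0 < marg1 p x → marg1 p x = marg1 p x0 := by
    intro x hx
    have h13pos : 0 < ∑ y, p (x, y, z0) := by
      have := hind13 x z0
      have hpos := mul_pos hx hm30
      rw [← this] at hpos
      exact hpos
    obtain ⟨y', hy'⟩ := exF (fun y => p (x, y, z0)) (fun y => hp _) h13pos
    obtain ⟨e12', e23', _, _, _⟩ := key x y' z0 hy'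
    calc marg1 p x = marg3 p z0 := e12'.trans e23'
      _ = marg1 p x0 := (e120.trans e230).symm
  have A2 : ∀ y, 0 < marg2 p y → marg2 p y = marg1 p x0 := by
    intro y hy
    have h23pos : 0 < ∑ x, p (x, y, z0) := by
      have := hind23 y z0
      have hpos := mul_pos hy hm30
      rw [← this] at hpos
      exact hpos
    obtain ⟨x', hx'⟩ := exF (fun x => p (x, y, z0)) (fun x => hp _) h23pos
    obtain ⟨e12', e23', _, _, _⟩ := key x' y z0 hx'
    calc marg2 p y = marg3 p z0 := e23'
      _ = marg1 p x0 := (e120.trans e230).symm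
  have A3 : ∀ z, 0 < marg3 p z → marg3 p z = marg1 p x0 := by
    intro z hz
    have h13pos : 0 < ∑ y, p (x0, y, z) := by
      have := hind13 x0 z
      have hpos := mul_pos hm10 hz
      rw [← this] at hpos
      exact hpos
    obtain ⟨y', hy'⟩ := exF (fun y => p (x0, y, z)) (fun y => hp _) h13pos
    obtain ⟨e12', e23', _, _, _⟩ := key x0 y' z hy'
    exact (e12'.trans e23').symm
  have sum1 : ∑ x, marg1 p x = 1 := by
    rw [← hsum]
    simp only [marg1, Fintype.sum_prod_type]
  have sum2 : ∑ y, marg2 p y = 1 := by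
    rw [← sum1]
    simp only [marg1, marg2]
    exact Finset.sum_comm
  have sum3 : ∑ z, marg3 p z = 1 := by
    rw [← sum1]
    simp only [marg1, marg3]
    rw [Finset.sum_comm]
    exact Finset.sum_congr rfl fun x _ => Finset.sum_comm
  have cardgen : ∀ {n : ℕ} (f : Fin n → ℝ), (∀ i, 0 ≤ f i) → (∑ i, f i) = 1 →
      (∀ i, 0 < f i → f i = marg1 p x0) →
      ((Finset.univ.filter fun i => 0 < f i).card : ℝ) * marg1 p x0 = 1 := by
    intro n f hf hs hA
    have h1 : ∑ i ∈ Finset.univ.filter (fun i => 0 < f i), f i = ∑ i, f i := by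
      apply Finset.sum_subset (Finset.filter_subset _ _)
      intro i _ hi
      simp only [Finset.mem_filter, Finset.mem_univ, true_and] at hi
      exact le_antisymm (not_lt.mp hi) (hf i)
    have h2 : ∑ i ∈ Finset.univ.filter (fun i => 0 < f i), f i
        = ((Finset.univ.filter fun i => 0 < f i).card : ℝ) * marg1 p x0 := by
      rw [Finset.sum_congr rfl (fun i hi => hA i (Finset.mem_filter.mp hi).2)]
      rw [Finset.sum_const, nsmul_eq_mul]
    rw [← h2, h1, hs]
  have c1 := cardgen (marg1 p) h1nn sum1 A1
  have c2 := cardgen (marg2 p) h2nn sum2 A2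
  have c3 := cardgen (marg3 p) h3nn sum3 A3
  have hcne : marg1 p x0 ≠ 0 := hm10.ne'
  refine ⟨fun x x' hx hx' => (A1 x hx).trans (A1 x' hx').symm,
    fun y y' hy hy' => (A2 y hy).trans (A2 y' hy').symm,
    fun z z' hz hz' => (A3 z hz).trans (A3 z' hz').symm, ?_, ?_⟩
  · have := mul_right_cancel₀ hcne (c1.trans c2.symm)
    exact_mod_cast this
  · have := mul_right_cancel₀ hcne (c2.trans c3.symm)
    exact_mod_cast this
end
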